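/- arXiv:2201.12166 — 10 statements merged into one kernel-verified Lean document; each statement's English description precedes it below -/
import Mathlib

section
/- Let S be a commutative semiring, n ≥ 1, and let M be one of the monoids M_n(S), UT_n(S), or U_n(S). If X ∈ M satisfies X J I_n (i.e., X generates the same two-sided ideal as the identity), then X is a unit in M. -/
namespace RSproof

open Finset Equiv Equiv.Perm Matrix

variable {S : Type*} [CommSemiring S] {n : ℕ}

/-- additively invertible elements -/
def AInv (x : S) : Prop := ∃ y, x + y = 0

lemma AInv.add {x₁ x₂ : S} (h₁ : AInv x₁) (h₂ : AInv x₂) : AInv (x₁ + x₂) := by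
  obtain ⟨y₁, hy₁⟩ := h₁; obtain ⟨y₂, hy₂⟩ := h₂
  exact ⟨y₁ + y₂, by rw [show x₁ + x₂ + (y₁ + y₂) = (x₁ + y₁) + (x₂ + y₂) by ring, hy₁, hy₂,
    add_zero]⟩

lemma AInv.zero : AInv (0 : S) := ⟨0, by simp⟩

lemma AInv.mul_left {x : S} (s : S) (h : AInv x) : AInv (s * x) := by
  obtain ⟨y, hy⟩ := h
  exact ⟨s * y, by rw [← mul_add, hy, mul_zero]⟩

lemma AInv.mul_right {x : S} (s : S) (h : AInv x) : AInv (x * s) := by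
  rw [mul_comm]; exact h.mul_left s

lemma AInv.sum {ι : Type*} (s : Finset ι) (f : ι → S) (h : ∀ i ∈ s, AInv (f i)) :
    AInv (∑ i ∈ s, f i) :=
  Finset.sum_induction f AInv (fun _ _ ha hb => ha.add hb) AInv.zero h

lemma AInv.cancel {c z : S} (h : AInv z) (e : c + z = z) : c = 0 := by
  obtain ⟨y, hy⟩ := h
  calc c = c + (z + y) := by rw [hy, add_zero]
    _ = (c + z) + y := by ring
    _ = z + y := by rw [e]
    _ = 0 := hy

/-- signed half-determinants -/
def dets (ε : ℤˣ) (M : Matrix (Fin n) (Fin n) S) : S :=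
  ∑ σ ∈ univ.filter (fun σ : Perm (Fin n) => Perm.sign σ = ε), ∏ i, M i (σ i)

lemma dets_one_eq (hn : (1 : ℤˣ) = 1) : dets 1 (1 : Matrix (Fin n) (Fin n) S) = 1 := by
  unfold dets
  rw [Finset.sum_eq_single (1 : Perm (Fin n))]
  · simp [Matrix.one_apply]
  · intro σ hσ hne
    obtain ⟨i, hi⟩ : ∃ i, σ i ≠ i := by
      by_contra h
      push_neg at h
      exact hne (Equiv.ext h)
    exact Finset.prod_eq_zero (mem_univ i) (Matrix.one_apply_ne' (by simpa using hi))
  · intro h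
    exact absurd (mem_filter.2 ⟨mem_univ _, by simp⟩) h

lemma dets_one_p : dets 1 (1 : Matrix (Fin n) (Fin n) S) = 1 := dets_one_eq rfl

lemma dets_one_n : dets (-1) (1 : Matrix (Fin n) (Fin n) S) = 0 := by
  unfold dets
  apply Finset.sum_eq_zero
  intro σ hσ
  have hσs : Perm.sign σ = -1 := (mem_filter.1 hσ).2
  have hne : σ ≠ 1 := by
    intro h; rw [h] at hσs; simp at hσs
  obtain ⟨i, hi⟩ : ∃ i, σ i ≠ i := by
    by_contra h
    push_neg at h
    exact hne (Equiv.ext h)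
  exact Finset.prod_eq_zero (mem_univ i) (Matrix.one_apply_ne' (by simpa using hi))


section CB

variable (A B : Matrix (Fin n) (Fin n) S)

/-- remainder in the sign-split Cauchy-Binet formula -/
def cbrem (ε : ℤˣ) : S :=
  ∑ f ∈ univ.filter (fun f : Fin n → Fin n => ¬ Function.Bijective f),
    ∑ σ ∈ univ.filter (fun σ : Perm (Fin n) => Perm.sign σ = ε),
      ∏ i, (A i (f i) * B (f i) (σ i))

lemma cb_gen (ε : ℤˣ) :
    dets ε (A * B) = (dets 1 A * dets ε B + dets (-1) A * dets (-ε) B) + cbrem A B ε := by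
  have step1 : dets ε (A * B) =
      ∑ f : Fin n → Fin n, ∑ σ ∈ univ.filter (fun σ : Perm (Fin n) => Perm.sign σ = ε),
        ∏ i, (A i (f i) * B (f i) (σ i)) := by
    unfold dets
    rw [Finset.sum_comm]
    apply Finset.sum_congr rfl
    intro σ _
    simp_rw [Matrix.mul_apply]
    rw [Finset.prod_univ_sum]
    rw [Fintype.piFinset_univ]
  rw [step1, ← Finset.sum_filter_add_sum_filter_not univ (fun f : Fin n → Fin n =>
    Function.Bijective f)]
  have hrem : ∑ f ∈ univ.filter (fun f : Fin n → Fin n => ¬ Function.Bijective f),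
      ∑ σ ∈ univ.filter (fun σ : Perm (Fin n) => Perm.sign σ = ε),
        ∏ i, (A i (f i) * B (f i) (σ i)) = cbrem A B ε := rfl
  rw [hrem]
  congr 1
  -- bijective part
  have step2 : ∑ f ∈ univ.filter (fun f : Fin n → Fin n => Function.Bijective f),
      ∑ σ ∈ univ.filter (fun σ : Perm (Fin n) => Perm.sign σ = ε),
        ∏ i, (A i (f i) * B (f i) (σ i)) =
      ∑ g : Perm (Fin n), ∑ σ ∈ univ.filter (fun σ : Perm (Fin n) => Perm.sign σ = ε),
        ∏ i, (A i (g i) * B (g i) (σ i)) := by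
    exact Finset.sum_bij (fun p h => Equiv.ofBijective p (by simpa using (mem_filter.1 h).2))
      (fun _ _ => mem_univ _) (fun _ _ _ _ h => by injection h)
      (fun b _ => ⟨b, mem_filter.2 ⟨mem_univ _, b.bijective⟩, Equiv.coe_fn_injective rfl⟩)
      (fun _ _ => rfl)
  rw [step2]
  have step3 : ∀ g : Perm (Fin n),
      ∑ σ ∈ univ.filter (fun σ : Perm (Fin n) => Perm.sign σ = ε),
        ∏ i, (A i (g i) * B (g i) (σ i)) =
      (∏ i, A i (g i)) *
        ∑ τ ∈ univ.filter (fun τ : Perm (Fin n) => Perm.sign τ = ε * Perm.sign g),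
          ∏ j, B j (τ j) := by
    intro g
    rw [Finset.mul_sum]
    apply Finset.sum_nbij' (fun σ => σ * g⁻¹) (fun τ => τ * g)
    · intro σ hσ
      rw [mem_filter] at hσ ⊢
      refine ⟨mem_univ _, ?_⟩
      rw [Perm.sign_mul, hσ.2, Perm.sign_inv]
    · intro τ hτ
      rw [mem_filter] at hτ ⊢
      refine ⟨mem_univ _, ?_⟩
      rw [Perm.sign_mul, hτ.2, mul_assoc]
      simp
    · intro σ _
      simp [mul_assoc]
    · intro τ _
      simp [mul_assoc]
    · intro σ _
      rw [Finset.prod_mul_distrib]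
      congr 1
      rw [← Equiv.prod_comp g (fun j => B j ((σ * g⁻¹) j))]
      apply Finset.prod_congr rfl
      intro i _
      simp
  simp_rw [step3]
  rw [← Finset.sum_filter_add_sum_filter_not univ
    (fun g : Perm (Fin n) => Perm.sign g = 1)]
  have e1 : ∑ g ∈ univ.filter (fun g : Perm (Fin n) => Perm.sign g = 1),
      (∏ i, A i (g i)) *
        ∑ τ ∈ univ.filter (fun τ : Perm (Fin n) => Perm.sign τ = ε * Perm.sign g),
          ∏ j, B j (τ j) = dets 1 A * dets ε B := by
    rw [dets, Finset.sum_mul]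
    apply Finset.sum_congr rfl
    intro g hg
    rw [(mem_filter.1 hg).2, mul_one]
    rfl
  have e2 : ∑ g ∈ univ.filter (fun g : Perm (Fin n) => ¬ Perm.sign g = 1),
      (∏ i, A i (g i)) *
        ∑ τ ∈ univ.filter (fun τ : Perm (Fin n) => Perm.sign τ = ε * Perm.sign g),
          ∏ j, B j (τ j) = dets (-1) A * dets (-ε) B := by
    rw [dets, Finset.sum_mul]
    rw [Finset.filter_congr (fun g _ => show (¬ Perm.sign g = 1) ↔ (Perm.sign g = -1) from
      ⟨fun h => (Int.units_eq_one_or _).resolve_left h, fun h => by rw [h]; decide⟩)]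
    apply Finset.sum_congr rfl
    intro g hg
    rw [(mem_filter.1 hg).2]
    have : ε * (-1 : ℤˣ) = -ε := by simp
    rw [this]
    rfl
  rw [e1, e2]

lemma cbrem_eq : cbrem A B 1 = cbrem A B (-1) := by
  unfold cbrem
  apply Finset.sum_congr rfl
  intro f hf
  have hbij : ¬ Function.Bijective f := by simpa using (mem_filter.1 hf).2
  obtain ⟨i, j, hfij, hij⟩ : ∃ i j, f i = f j ∧ i ≠ j := by
    have H : ¬ Function.Injective f := fun h => hbij (Finite.injective_iff_bijective.1 h)
    rw [Function.Injective] at H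
    push_neg at H
    exact H
  apply Finset.sum_nbij' (fun σ => σ * Equiv.swap i j) (fun σ => σ * Equiv.swap i j)
  · intro σ hσ
    rw [mem_filter] at hσ ⊢
    refine ⟨mem_univ _, ?_⟩
    rw [Perm.sign_mul, hσ.2, Equiv.Perm.sign_swap hij, one_mul]
  · intro σ hσ
    rw [mem_filter] at hσ ⊢
    refine ⟨mem_univ _, ?_⟩
    rw [Perm.sign_mul, hσ.2, Equiv.Perm.sign_swap hij]
    decide
  · intro σ _
    rw [mul_assoc, Equiv.swap_mul_self, mul_one]
  · intro σ _
    rw [mul_assoc, Equiv.swap_mul_self, mul_one]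
  · intro σ _
    rw [Finset.prod_mul_distrib, Finset.prod_mul_distrib]
    congr 1
    exact Fintype.prod_equiv (Equiv.swap i j) _ _ (fun x => by
      simp [Equiv.apply_swap_eq_self hfij])

lemma cauchy : ∃ m : S, dets 1 (A * B) = (dets 1 A * dets 1 B + dets (-1) A * dets (-1) B) + m
    ∧ dets (-1) (A * B) = (dets 1 A * dets (-1) B + dets (-1) A * dets 1 B) + m := by
  refine ⟨cbrem A B 1, cb_gen A B 1, ?_⟩
  rw [cb_gen A B (-1), cbrem_eq]
  norm_num

end CB


section ADJ

variable (A : Matrix (Fin n) (Fin n) S)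

/-- sign-split adjugate-like matrix -/
def adjs (ε : ℤˣ) : Matrix (Fin n) (Fin n) S :=
  Matrix.of fun i k =>
    ∑ σ ∈ univ.filter (fun σ : Perm (Fin n) => Perm.sign σ = ε ∧ σ k = i),
      ∏ m ∈ univ.erase k, A m (σ m)

lemma adjs_mul_expand (ε : ℤˣ) (i j : Fin n) :
    (adjs A ε * A) i j = ∑ σ ∈ univ.filter (fun σ : Perm (Fin n) => Perm.sign σ = ε),
      (∏ m ∈ univ.erase (σ⁻¹ i), A m (σ m)) * A (σ⁻¹ i) j := by
  rw [Matrix.mul_apply]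
  simp_rw [adjs, Matrix.of_apply, Finset.sum_mul]
  have hsplit : ∀ k : Fin n, (univ.filter (fun σ : Perm (Fin n) =>
      Perm.sign σ = ε ∧ σ k = i)) =
      (univ.filter (fun σ : Perm (Fin n) => Perm.sign σ = ε)).filter (fun σ => σ k = i) := by
    intro k
    rw [Finset.filter_filter]
  simp_rw [hsplit, Finset.sum_filter]
  rw [Finset.sum_comm]
  apply Finset.sum_congr rfl
  intro σ _
  have hiff : ∀ k : Fin n, (σ k = i) = (k = σ⁻¹ i) := by
    intro k
    apply propext
    constructor
    · intro h; rw [← h]; simp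
    · intro h; rw [h]; simp
  simp_rw [hiff]
  by_cases h : Perm.sign σ = ε
  · simp only [h, if_true]
    rw [Finset.sum_ite_eq' univ (σ⁻¹ i)]
    simp
  · simp [h]

lemma adjs_mul_diag (ε : ℤˣ) (i : Fin n) : (adjs A ε * A) i i = dets ε A := by
  rw [adjs_mul_expand]
  apply Finset.sum_congr rfl
  intro σ _
  have h : A (σ⁻¹ i) i = A (σ⁻¹ i) (σ (σ⁻¹ i)) := by simp
  rw [h, Finset.prod_erase_mul univ _ (mem_univ (σ⁻¹ i))]

lemma adjs_mul_offdiag {i j : Fin n} (hij : i ≠ j) :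
    (adjs A 1 * A) i j = (adjs A (-1) * A) i j := by
  rw [adjs_mul_expand, adjs_mul_expand]
  apply Finset.sum_nbij' (fun σ => σ * Equiv.swap (σ⁻¹ i) (σ⁻¹ j))
    (fun σ => σ * Equiv.swap (σ⁻¹ i) (σ⁻¹ j))
  · intro σ hσ
    rw [mem_filter] at hσ ⊢
    refine ⟨mem_univ _, ?_⟩
    rw [Perm.sign_mul, hσ.2, Equiv.Perm.sign_swap (fun h => hij (by
      have := congrArg σ h; simpa using this)), one_mul]
  · intro σ hσ
    rw [mem_filter] at hσ ⊢
    refine ⟨mem_univ _, ?_⟩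
    rw [Perm.sign_mul, hσ.2, Equiv.Perm.sign_swap (fun h => hij (by
      have := congrArg σ h; simpa using this))]
    decide
  · intro σ _
    set k := σ⁻¹ i with hk
    set l := σ⁻¹ j with hl
    have hkl : k ≠ l := fun h => hij (by
      have := congrArg σ h; simpa [hk, hl] using this)
    have h1 : (σ * Equiv.swap k l) l = i := by
      simp [Perm.mul_apply, Equiv.swap_apply_right, hk]
    have h2 : (σ * Equiv.swap k l) k = j := by
      simp [Perm.mul_apply, Equiv.swap_apply_left, hl]
    have e1 : (σ * Equiv.swap k l)⁻¹ i = l := by rw [← h1]; simp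
    have e2 : (σ * Equiv.swap k l)⁻¹ j = k := by rw [← h2]; simp
    rw [e1, e2, mul_assoc, Equiv.swap_comm l k, Equiv.swap_mul_self, mul_one]
  · intro σ _
    set k := σ⁻¹ i with hk
    set l := σ⁻¹ j with hl
    have hkl : k ≠ l := fun h => hij (by
      have := congrArg σ h; simpa [hk, hl] using this)
    have h1 : (σ * Equiv.swap k l) l = i := by
      simp [Perm.mul_apply, Equiv.swap_apply_right, hk]
    have h2 : (σ * Equiv.swap k l) k = j := by
      simp [Perm.mul_apply, Equiv.swap_apply_left, hl]
    have e1 : (σ * Equiv.swap k l)⁻¹ i = l := by rw [← h1]; simp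
    have e2 : (σ * Equiv.swap k l)⁻¹ j = k := by rw [← h2]; simp
    rw [e1, e2, mul_assoc, Equiv.swap_comm l k, Equiv.swap_mul_self, mul_one]
  · intro σ _
    set k := σ⁻¹ i with hk
    set l := σ⁻¹ j with hl
    have hkl : k ≠ l := fun h => hij (by
      have := congrArg σ h; simpa [hk, hl] using this)
    have h1 : (σ * Equiv.swap k l) l = i := by
      simp [Perm.mul_apply, Equiv.swap_apply_right, hk]
    have h2 : (σ * Equiv.swap k l) k = j := by
      simp [Perm.mul_apply, Equiv.swap_apply_left, hl]
    have e1 : (σ * Equiv.swap k l)⁻¹ i = l := by rw [← h1]; simp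
    have hσl : σ l = j := by rw [hl]; simp
    have herase : (univ.erase l).erase k = (univ.erase k).erase l := by
      ext m; simp [and_comm, and_left_comm]
    -- LHS : (∏_{m ∈ erase k} A m (σ m)) * A k j
    -- RHS : (∏_{m ∈ erase l} A m (σ' m)) * A l j
    have hL : (∏ m ∈ univ.erase k, A m (σ m)) =
        A l j * ∏ m ∈ (univ.erase k).erase l, A m (σ m) := by
      rw [← hσl]
      exact (Finset.mul_prod_erase _ _ (Finset.mem_erase.2 ⟨fun h => hkl h.symm, mem_univ _⟩)).symm
    have hR : (∏ m ∈ univ.erase ((σ * Equiv.swap k l)⁻¹ i), A m ((σ * Equiv.swap k l) m)) =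
        A k j * ∏ m ∈ (univ.erase k).erase l, A m (σ m) := by
      rw [e1]
      rw [← h2]
      rw [(Finset.mul_prod_erase (univ.erase l) (fun m => A m ((σ * Equiv.swap k l) m))
        (Finset.mem_erase.2 ⟨hkl, mem_univ _⟩)).symm]
      rw [← herase]
      congr 1
      apply Finset.prod_congr rfl
      intro m hm
      rw [Finset.mem_erase, Finset.mem_erase] at hm
      have : (σ * Equiv.swap k l) m = σ m := by
        simp [Perm.mul_apply, Equiv.swap_apply_of_ne_of_ne hm.1 hm.2.1]
      rw [this]
    rw [hL, hR, e1]
    ring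

end ADJ


section MAIN

variable {A B : Matrix (Fin n) (Fin n) S}

lemma gen_AInv (hAB : A * B = 1) {x y : Fin n} (c : Fin n) (hxy : x ≠ y) :
    AInv (A x c * B c y) := by
  refine ⟨∑ c' ∈ univ.erase c, A x c' * B c' y, ?_⟩
  rw [Finset.add_sum_erase univ (fun c' => A x c' * B c' y) (mem_univ c)]
  rw [← Matrix.mul_apply, hAB, Matrix.one_apply_ne hxy]

lemma key_AInv (hAB : A * B = 1) {i j : Fin n} (hij : i ≠ j) (τ σ : Perm (Fin n)) :
    AInv ((∏ m, B m (τ m)) * ((∏ m ∈ univ.erase (σ⁻¹ i), A m (σ m)) * A (σ⁻¹ i) j)) := by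
  set k := σ⁻¹ i with hk
  set l := σ⁻¹ j with hl
  have hkl : k ≠ l := fun h => hij (by
    have := congrArg σ h; simpa [hk, hl] using this)
  have hσl : σ l = j := by rw [hl]; simp
  have hB : (∏ m, B m (τ m)) = B j (τ j) * ∏ m ∈ univ.erase j, B m (τ m) :=
    (Finset.mul_prod_erase _ _ (mem_univ j)).symm
  by_cases hc : τ j = k
  · have hA : (∏ m ∈ univ.erase k, A m (σ m)) =
        A l j * ∏ m ∈ (univ.erase k).erase l, A m (σ m) := by
      rw [← hσl]
      exact (Finset.mul_prod_erase _ _ (Finset.mem_erase.2 ⟨fun h => hkl h.symm, mem_univ _⟩)).symm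
    have hgen : AInv (A l j * B j (τ j)) := by
      rw [hc]; exact gen_AInv hAB j hkl.symm
    have hrw : (∏ m, B m (τ m)) * ((∏ m ∈ univ.erase k, A m (σ m)) * A k j) =
        (A l j * B j (τ j)) * ((∏ m ∈ univ.erase j, B m (τ m)) *
          ((∏ m ∈ (univ.erase k).erase l, A m (σ m)) * A k j)) := by
      rw [hB, hA]; ring
    rw [hrw]
    exact AInv.mul_right _ hgen
  · have hgen : AInv (A k j * B j (τ j)) := gen_AInv hAB j (fun h => hc h.symm)
    have hrw : (∏ m, B m (τ m)) * ((∏ m ∈ univ.erase k, A m (σ m)) * A k j) =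
        (A k j * B j (τ j)) * ((∏ m ∈ univ.erase j, B m (τ m)) *
          (∏ m ∈ univ.erase k, A m (σ m))) := by
      rw [hB]; ring
    rw [hrw]
    exact AInv.mul_right _ hgen

lemma diag_cancel {p nn p' n' c m : S}
    (hγ : p + nn * c = nn + p * c)
    (hu : (p * p' + nn * n') + m = 1) (hv : (p * n' + nn * p') + m = 0) : c = 1 := by
  have h : p' * (p + nn * c) + n' * (nn + p * c)
      = p' * (nn + p * c) + n' * (p + nn * c) := by rw [hγ]
  have key : ((p * n' + nn * p') + m) + ((p * p' + nn * n') + m) * c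
      = ((p * p' + nn * n') + m) + ((p * n' + nn * p') + m) * c := by
    calc ((p * n' + nn * p') + m) + ((p * p' + nn * n') + m) * c
        = (p' * (nn + p * c) + n' * (p + nn * c)) + (m + m * c) := by ring
      _ = (p' * (p + nn * c) + n' * (nn + p * c)) + (m + m * c) := by rw [← h]
      _ = ((p * p' + nn * n') + m) + ((p * n' + nn * p') + m) * c := by ring
  rw [hu, hv] at key
  simpa using key

lemma offdiag_cancel {p nn p' n' g c m : S}
    (hδ : g + nn * c = g + p * c)
    (hu : (p * p' + nn * n') + m = 1) (hv : (p * n' + nn * p') + m = 0)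
    (hw : AInv ((p' + n') * g)) : c = 0 := by
  have h : p' * (g + nn * c) + n' * (g + p * c)
      = p' * (g + p * c) + n' * (g + nn * c) := by rw [hδ]
  have key : ((p' + n') * g) + c = ((p' + n') * g) + 0 := by
    calc ((p' + n') * g) + c
        = ((p' + n') * g) + ((p * p' + nn * n') + m) * c := by rw [hu, one_mul]
      _ = (p' * (g + p * c) + n' * (g + nn * c)) + m * c := by ring
      _ = (p' * (g + nn * c) + n' * (g + p * c)) + m * c := by rw [← h]
      _ = ((p' + n') * g) + ((p * n' + nn * p') + m) * c := by ring
      _ = ((p' + n') * g) + 0 := by rw [hv, zero_mul]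
  refine hw.cancel ?_
  calc c + ((p' + n') * g) = ((p' + n') * g) + c := add_comm _ _
    _ = ((p' + n') * g) + 0 := key
    _ = (p' + n') * g := add_zero _

theorem mul_eq_one_comm_core (A B : Matrix (Fin n) (Fin n) S) (hAB : A * B = 1) :
    B * A = 1 := by
  obtain ⟨m, hm1, hm2⟩ := cauchy A B
  rw [hAB, dets_one_p] at hm1
  rw [hAB, dets_one_n] at hm2
  have h1 : adjs A 1 * A + dets (-1) A • (1 : Matrix (Fin n) (Fin n) S) =
      adjs A (-1) * A + dets 1 A • (1 : Matrix (Fin n) (Fin n) S) := by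
    ext i j
    rcases eq_or_ne i j with rfl | hij
    · simp only [Matrix.add_apply, Matrix.smul_apply, Matrix.one_apply_eq, smul_eq_mul,
        mul_one]
      rw [adjs_mul_diag, adjs_mul_diag, add_comm]
    · simp only [Matrix.add_apply, Matrix.smul_apply, Matrix.one_apply_ne hij, smul_eq_mul,
        mul_zero, add_zero]
      exact adjs_mul_offdiag A hij
  have hPQ : adjs A 1 + dets (-1) A • B = adjs A (-1) + dets 1 A • B := by
    have h := congrArg (· * B) h1
    simp only [Matrix.add_mul, Matrix.smul_mul, Matrix.one_mul, Matrix.mul_assoc, hAB,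
      Matrix.mul_one] at h
    exact h
  have h2 : adjs A 1 * A + dets (-1) A • (B * A) = adjs A (-1) * A + dets 1 A • (B * A) := by
    have h := congrArg (· * A) hPQ
    simp only [Matrix.add_mul, Matrix.smul_mul, Matrix.mul_assoc] at h
    exact h
  ext i j
  have e2 : (adjs A 1 * A) i j + dets (-1) A * (B * A) i j
      = (adjs A (-1) * A) i j + dets 1 A * (B * A) i j := by
    have h := congrArg (fun M => M i j) h2
    simpa [Matrix.add_apply, Matrix.smul_apply] using h
  rcases eq_or_ne i j with rfl | hij
  · rw [Matrix.one_apply_eq]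
    rw [adjs_mul_diag, adjs_mul_diag] at e2
    exact diag_cancel e2 hm1.symm hm2.symm
  · rw [Matrix.one_apply_ne hij]
    rw [adjs_mul_offdiag A hij] at e2
    refine offdiag_cancel e2 hm1.symm hm2.symm ?_
    rw [add_mul]
    refine AInv.add ?_ ?_
    · rw [adjs_mul_expand, dets, Finset.sum_mul_sum]
      refine AInv.sum _ _ (fun τ hτ => AInv.sum _ _ (fun σ hσ => ?_))
      exact key_AInv hAB hij τ σ
    · rw [adjs_mul_expand, dets, Finset.sum_mul_sum]
      refine AInv.sum _ _ (fun τ hτ => AInv.sum _ _ (fun σ hσ => ?_))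
      exact key_AInv hAB hij τ σ

theorem two_sided (X : Matrix (Fin n) (Fin n) S)
    (A B : Matrix (Fin n) (Fin n) S) (h : A * X * B = 1) :
    X * (B * A) = 1 ∧ (B * A) * X = 1 := by
  constructor
  · have hXB : A * (X * B) = 1 := by rw [← mul_assoc]; exact h
    have := mul_eq_one_comm_core A (X * B) hXB
    rw [mul_assoc] at this
    exact this
  · have := mul_eq_one_comm_core (A * X) B h
    rw [← mul_assoc] at this
    exact this

end MAIN

end RSproof




/-- The monoid of upper triangular `n × n` matrices over `S`. -/
def UTsub (n : ℕ) (S : Type*) [CommSemiring S] : Submonoid (Matrix (Fin n) (Fin n) S) where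
  carrier := {M | ∀ i j : Fin n, j < i → M i j = 0}
  one_mem' := by
    intro i j h
    exact Matrix.one_apply_ne (by exact fun e => absurd e.symm (ne_of_lt h))
  mul_mem' := by
    intro M N hM hN i j hij
    show (M * N) i j = 0
    rw [Matrix.mul_apply]
    apply Finset.sum_eq_zero
    intro k _
    rcases lt_or_ge k i with h | h
    · rw [hM i k h, zero_mul]
    · rw [hN k j (lt_of_lt_of_le hij h), mul_zero]

/-- The monoid of unitriangular `n × n` matrices over `S`. -/
def Usub (n : ℕ) (S : Type*) [CommSemiring S] : Submonoid (Matrix (Fin n) (Fin n) S) where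
  carrier := {M | (∀ i j : Fin n, j < i → M i j = 0) ∧ ∀ i : Fin n, M i i = 1}
  one_mem' := by
    constructor
    · intro i j h
      exact Matrix.one_apply_ne (by exact fun e => absurd e.symm (ne_of_lt h))
    · intro i; exact Matrix.one_apply_eq i
  mul_mem' := by
    intro M N hM hN
    refine ⟨(UTsub _ _).mul_mem' hM.1 hN.1, ?_⟩
    intro i
    show (M * N) i i = 1
    rw [Matrix.mul_apply]
    rw [Finset.sum_eq_single i]
    · rw [hM.2 i, hN.2 i, one_mul]
    · intro k _ hk
      rcases lt_or_gt_of_ne hk with h | h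
      · rw [hM.1 i k h, zero_mul]
      · rw [hN.1 k i h, mul_zero]
    · intro h; exact absurd (Finset.mem_univ i) h

/-- If `X` is J-related to the identity in `M_n(S)`, `UT_n(S)` or `U_n(S)` over a
commutative semiring `S`, then `X` is a unit in that monoid. -/
theorem stmt3 (n : ℕ) (S : Type*) [CommSemiring S] :
    (∀ X : Matrix (Fin n) (Fin n) S, (∃ A B, A * X * B = 1) → IsUnit X) ∧
    (∀ X : (UTsub n S), (∃ A B, A * X * B = 1) → IsUnit X) ∧
    (∀ X : (Usub n S), (∃ A B, A * X * B = 1) → IsUnit X) := by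
  have key : ∀ (X A B : Matrix (Fin n) (Fin n) S), A * X * B = 1 →
      X * (B * A) = 1 ∧ (B * A) * X = 1 := fun X A B h => RSproof.two_sided X A B h
  refine ⟨?_, ?_, ?_⟩
  · rintro X ⟨A, B, h⟩
    obtain ⟨h1, h2⟩ := key X A B h
    exact ⟨⟨X, B * A, h1, h2⟩, rfl⟩
  · rintro X ⟨A, B, h⟩
    have hc : (A : Matrix (Fin n) (Fin n) S) * X * B = 1 := by
      have := congrArg Subtype.val h
      simpa using this
    obtain ⟨h1, h2⟩ := key X A B hc
    refine ⟨⟨X, ⟨(B : Matrix (Fin n) (Fin n) S) * A, mul_mem B.2 A.2⟩, ?_, ?_⟩, rfl⟩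
    · apply Subtype.ext
      simpa using h1
    · apply Subtype.ext
      simpa using h2
  · rintro X ⟨A, B, h⟩
    have hc : (A : Matrix (Fin n) (Fin n) S) * X * B = 1 := by
      have := congrArg Subtype.val h
      simpa using this
    obtain ⟨h1, h2⟩ := key X A B hc
    refine ⟨⟨X, ⟨(B : Matrix (Fin n) (Fin n) S) * A, mul_mem B.2 A.2⟩, ?_, ?_⟩, rfl⟩
    · apply Subtype.ext
      simpa using h1
    · apply Subtype.ext
      simpa using h2
end

section
/- Let S be a commutative semiring and A, X, B ∈ M_n(S) with AXB = I_n. Then XBA = BAX = I_n; in particular X is invertible in M_n(S). -/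
open Matrix Finset Equiv

variable {n : ℕ}

/-- positive determinant -/
def detp {S : Type*} [CommSemiring S] (M : Matrix (Fin n) (Fin n) S) : S :=
  ∑ σ ∈ Finset.univ.filter (fun σ : Equiv.Perm (Fin n) => Equiv.Perm.sign σ = 1),
    ∏ i, M (σ i) i

/-- negative determinant -/
def detm {S : Type*} [CommSemiring S] (M : Matrix (Fin n) (Fin n) S) : S :=
  ∑ σ ∈ Finset.univ.filter (fun σ : Equiv.Perm (Fin n) => Equiv.Perm.sign σ = -1),
    ∏ i, M (σ i) i

def adjp {S : Type*} [CommSemiring S] (M : Matrix (Fin n) (Fin n) S) :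
    Matrix (Fin n) (Fin n) S :=
  Matrix.of fun i j => detp (M.updateRow j (Pi.single i 1))

def adjm {S : Type*} [CommSemiring S] (M : Matrix (Fin n) (Fin n) S) :
    Matrix (Fin n) (Fin n) S :=
  Matrix.of fun i j => detm (M.updateRow j (Pi.single i 1))

theorem detp_sub_detm {R : Type*} [CommRing R] (M : Matrix (Fin n) (Fin n) R) :
    detp M - detm M = M.det := by
  rw [Matrix.det_apply]
  rw [← Finset.sum_filter_add_sum_filter_not Finset.univ
    (fun σ : Equiv.Perm (Fin n) => Equiv.Perm.sign σ = 1)]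
  have h1 : ∑ σ ∈ Finset.univ.filter (fun σ : Equiv.Perm (Fin n) => Equiv.Perm.sign σ = 1),
      Equiv.Perm.sign σ • ∏ i, M (σ i) i = detp M := by
    apply Finset.sum_congr rfl
    intro σ hσ
    simp only [Finset.mem_filter] at hσ
    rw [hσ.2, one_smul]
  have h2 : Finset.univ.filter (fun σ : Equiv.Perm (Fin n) => ¬ Equiv.Perm.sign σ = 1)
      = Finset.univ.filter (fun σ : Equiv.Perm (Fin n) => Equiv.Perm.sign σ = -1) := by
    apply Finset.filter_congr
    intro σ _
    rcases Int.units_eq_one_or (Equiv.Perm.sign σ) with h | h <;> simp [h]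
  have h3 : ∑ σ ∈ Finset.univ.filter (fun σ : Equiv.Perm (Fin n) => ¬ Equiv.Perm.sign σ = 1),
      Equiv.Perm.sign σ • ∏ i, M (σ i) i = - detm M := by
    rw [h2, detm, ← Finset.sum_neg_distrib]
    apply Finset.sum_congr rfl
    intro σ hσ
    simp only [Finset.mem_filter] at hσ
    rw [hσ.2]
    simp [Units.smul_def]
  rw [h1, h3]
  ring

theorem adjp_sub_adjm {R : Type*} [CommRing R] (M : Matrix (Fin n) (Fin n) R) :
    adjp M - adjm M = M.adjugate := by
  ext i j
  simp [_root_.adjp, adjm, Matrix.adjugate_apply, detp_sub_detm]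

section maps

variable {S T : Type*} [CommSemiring S] [CommSemiring T] (f : S →+* T)

theorem detp_map (M : Matrix (Fin n) (Fin n) S) : detp (M.map f) = f (detp M) := by
  simp [_root_.detp, map_sum, map_prod, Matrix.map_apply]

theorem detm_map (M : Matrix (Fin n) (Fin n) S) : detm (M.map f) = f (detm M) := by
  simp [detm, map_sum, map_prod, Matrix.map_apply]

theorem updateRow_single_map (M : Matrix (Fin n) (Fin n) S) (i j : Fin n) :
    (M.map f).updateRow j (Pi.single i 1) = (M.updateRow j (Pi.single i 1)).map f := by
  ext r c
  by_cases hr : r = j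
  · subst hr
    simp only [Matrix.updateRow_self, Matrix.map_apply, Matrix.updateRow_self]
    by_cases hc : c = i
    · subst hc; simp
    · simp [Pi.single_eq_of_ne hc]
  · simp [Matrix.updateRow_ne hr, Matrix.map_apply]

theorem adjp_map (M : Matrix (Fin n) (Fin n) S) : adjp (M.map f) = (adjp M).map f := by
  ext i j
  simp only [_root_.adjp, Matrix.of_apply, Matrix.map_apply]
  rw [updateRow_single_map, _root_.detp_map]

theorem adjm_map (M : Matrix (Fin n) (Fin n) S) : adjm (M.map f) = (adjm M).map f := by
  ext i j
  simp only [adjm, Matrix.of_apply, Matrix.map_apply]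
  rw [updateRow_single_map, detm_map]

theorem smul_one_map (c : S) :
    (c • (1 : Matrix (Fin n) (Fin n) S)).map f = f c • (1 : Matrix (Fin n) (Fin n) T) := by
  ext i j
  by_cases h : i = j <;> simp [Matrix.smul_apply, Matrix.one_apply, h]

end maps

section eval_one

variable {S : Type*} [CommSemiring S]

theorem detp_one : detp (1 : Matrix (Fin n) (Fin n) S) = 1 := by
  rw [_root_.detp]
  rw [Finset.sum_eq_single (1 : Equiv.Perm (Fin n))]
  · simp [Matrix.one_apply]
  · intro σ hσ hne
    obtain ⟨i, hi⟩ : ∃ i, σ i ≠ i := by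
      by_contra hc
      push_neg at hc
      exact hne (Equiv.ext hc)
    exact Finset.prod_eq_zero (Finset.mem_univ i) (Matrix.one_apply_ne hi)
  · intro hid
    exfalso
    apply hid
    simp

theorem detm_one : detm (1 : Matrix (Fin n) (Fin n) S) = 0 := by
  rw [detm]
  apply Finset.sum_eq_zero
  intro σ hσ
  simp only [Finset.mem_filter] at hσ
  obtain ⟨i, hi⟩ : ∃ i, σ i ≠ i := by
    by_contra hc
    push_neg at hc
    have : σ = 1 := Equiv.ext hc
    rw [this] at hσ
    simp at hσ
  exact Finset.prod_eq_zero (Finset.mem_univ i) (Matrix.one_apply_ne hi)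

theorem col_zero_detp (M : Matrix (Fin n) (Fin n) S) (j : Fin n) (h : ∀ r, M r j = 0) :
    detp M = 0 := by
  apply Finset.sum_eq_zero
  intro σ _
  exact Finset.prod_eq_zero (Finset.mem_univ j) (h (σ j))

theorem col_zero_detm (M : Matrix (Fin n) (Fin n) S) (j : Fin n) (h : ∀ r, M r j = 0) :
    detm M = 0 := by
  apply Finset.sum_eq_zero
  intro σ _
  exact Finset.prod_eq_zero (Finset.mem_univ j) (h (σ j))

theorem updateRow_one_col_zero (i j : Fin n) (hij : i ≠ j) (r : Fin n) :
    ((1 : Matrix (Fin n) (Fin n) S).updateRow j (Pi.single i 1)) r j = 0 := by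
  by_cases hr : r = j
  · subst hr
    rw [Matrix.updateRow_self]
    exact Pi.single_eq_of_ne (Ne.symm hij) 1
  · rw [Matrix.updateRow_ne hr]
    exact Matrix.one_apply_ne hr

theorem adjp_one : adjp (1 : Matrix (Fin n) (Fin n) S) = 1 := by
  ext i j
  by_cases h : i = j
  · subst h
    have : (1 : Matrix (Fin n) (Fin n) S).updateRow i (Pi.single i 1) = 1 := by
      ext r c
      by_cases hr : r = i
      · subst hr
        simp [Matrix.one_apply, Pi.single_apply, eq_comm]
      · simp [Matrix.updateRow_ne hr]
    simp [_root_.adjp, this, detp_one, Matrix.one_apply]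
  · simp only [_root_.adjp, Matrix.of_apply]
    rw [col_zero_detp _ j (updateRow_one_col_zero i j h), Matrix.one_apply_ne h]

theorem adjm_one : adjm (1 : Matrix (Fin n) (Fin n) S) = 0 := by
  ext i j
  by_cases h : i = j
  · subst h
    have : (1 : Matrix (Fin n) (Fin n) S).updateRow i (Pi.single i 1) = 1 := by
      ext r c
      by_cases hr : r = i
      · subst hr
        simp [Matrix.one_apply, Pi.single_apply, eq_comm]
      · simp [Matrix.updateRow_ne hr]
    simp [adjm, this, detm_one]
  · simp only [adjm, Matrix.of_apply, Matrix.zero_apply]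
    exact col_zero_detm _ j (updateRow_one_col_zero i j h)

end eval_one

/-- the key identity over a commutative ring -/
theorem key_ring {R : Type*} [CommRing R] (A B : Matrix (Fin n) (Fin n) R) :
    B * adjp (A * B) * A + detm (A * B) • (1 : Matrix (Fin n) (Fin n) R)
      = B * adjm (A * B) * A + detp (A * B) • 1 := by
  rw [← sub_eq_sub_iff_add_eq_add, sub_eq_sub_iff_sub_eq_sub]
  have h1 : B * adjp (A*B) * A - B * adjm (A*B) * A
      = B * (adjp (A*B) - adjm (A*B)) * A := by noncomm_ring
  rw [h1, adjp_sub_adjm, Matrix.adjugate_mul_distrib]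
  have h2 : B * (Matrix.adjugate B * Matrix.adjugate A) * A
      = (B * Matrix.adjugate B) * (Matrix.adjugate A * A) := by noncomm_ring
  rw [h2, Matrix.mul_adjugate, Matrix.adjugate_mul, Matrix.smul_mul, Matrix.mul_smul,
    smul_smul, one_mul, ← sub_smul, detp_sub_detm, Matrix.det_mul, mul_comm]


theorem matrix_map_inj {S T : Type*} (f : S → T) (hf : Function.Injective f)
    {M N : Matrix (Fin n) (Fin n) S} (h : M.map f = N.map f) : M = N := by
  ext i j
  apply hf
  have h' := congrArg (fun P : Matrix (Fin n) (Fin n) T => P i j) h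
  simpa [Matrix.map_apply] using h'

section push

variable {S T : Type*} [CommSemiring S] [CommSemiring T] (f : S →+* T)

theorem mapm_add (M N : Matrix (Fin n) (Fin n) S) : (M + N).map f = M.map f + N.map f := by
  simp [← RingHom.mapMatrix_apply, map_add]

theorem mapm_mul (M N : Matrix (Fin n) (Fin n) S) : (M * N).map f = M.map f * N.map f := by
  simp [← RingHom.mapMatrix_apply, _root_.map_mul]

theorem expr_map_m (A B : Matrix (Fin n) (Fin n) S) :
    (B * adjp (A * B) * A + detm (A * B) • (1 : Matrix (Fin n) (Fin n) S)).map f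
      = B.map f * adjp (A.map f * B.map f) * A.map f
        + detm (A.map f * B.map f) • (1 : Matrix (Fin n) (Fin n) T) := by
  rw [mapm_add, mapm_mul, mapm_mul, smul_one_map, ← detm_map, ← adjp_map, ← mapm_mul]

theorem expr_map_p (A B : Matrix (Fin n) (Fin n) S) :
    (B * adjm (A * B) * A + detp (A * B) • (1 : Matrix (Fin n) (Fin n) S)).map f
      = B.map f * adjm (A.map f * B.map f) * A.map f
        + detp (A.map f * B.map f) • (1 : Matrix (Fin n) (Fin n) T) := by
  rw [mapm_add, mapm_mul, mapm_mul, smul_one_map, ← _root_.detp_map, ← adjm_map, ← mapm_mul]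

end push

theorem key_semiring {S : Type*} [CommSemiring S] (A B : Matrix (Fin n) (Fin n) S) :
    B * adjp (A * B) * A + detm (A * B) • (1 : Matrix (Fin n) (Fin n) S)
      = B * adjm (A * B) * A + detp (A * B) • 1 := by
  classical
  set V := ((Fin n × Fin n) ⊕ (Fin n × Fin n)) with hV
  let 𝔸 : Matrix (Fin n) (Fin n) (MvPolynomial V ℕ) :=
    Matrix.of fun i j => MvPolynomial.X (Sum.inl (i, j))
  let 𝔹 : Matrix (Fin n) (Fin n) (MvPolynomial V ℕ) :=
    Matrix.of fun i j => MvPolynomial.X (Sum.inr (i, j))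
  have hgen : 𝔹 * adjp (𝔸 * 𝔹) * 𝔸 + detm (𝔸 * 𝔹) • 1
      = 𝔹 * adjm (𝔸 * 𝔹) * 𝔸 + detp (𝔸 * 𝔹) • 1 := by
    have hψ : Function.Injective
        (MvPolynomial.map (σ := V) (Nat.castRingHom ℤ)) :=
      MvPolynomial.map_injective _ Nat.cast_injective
    apply matrix_map_inj _ hψ
    rw [expr_map_m, expr_map_p]
    exact key_ring _ _
  let φ : MvPolynomial V ℕ →+* S :=
    MvPolynomial.eval₂Hom (Nat.castRingHom S)
      (Sum.elim (fun p => A p.1 p.2) (fun p => B p.1 p.2))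
  have hA : 𝔸.map φ = A := by
    ext i j
    simp [𝔸, Matrix.map_apply, φ]
  have hB : 𝔹.map φ = B := by
    ext i j
    simp [𝔹, Matrix.map_apply, φ]
  have h2 := congrArg (fun M : Matrix (Fin n) (Fin n) (MvPolynomial V ℕ) => M.map φ) hgen
  rw [expr_map_m, expr_map_p, hA, hB] at h2
  exact h2

/-- Reutenauer–Straubing: over a commutative semiring, `A * B = 1` implies `B * A = 1`. -/
theorem semiring_mul_eq_one_comm {S : Type*} [CommSemiring S]
    (A B : Matrix (Fin n) (Fin n) S) (h : A * B = 1) : B * A = 1 := by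
  have := key_semiring A B
  rw [h, adjp_one, adjm_one, detp_one, detm_one] at this
  simpa using this

/-- Over a commutative semiring, `A * X * B = 1` implies `X * (B * A) = (B * A) * X = 1`;
in particular `X` is invertible. -/
theorem stmt4 {n : ℕ} {S : Type*} [CommSemiring S] (A X B : Matrix (Fin n) (Fin n) S)
    (h : A * X * B = 1) :
    X * (B * A) = 1 ∧ (B * A) * X = 1 ∧ IsUnit X := by
  have h1 : (A * X) * B = 1 := h
  have h2 : B * (A * X) = 1 := semiring_mul_eq_one_comm _ _ h1
  have h3 : A * (X * B) = 1 := by rw [← mul_assoc]; exact h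
  have h4 : (X * B) * A = 1 := semiring_mul_eq_one_comm _ _ h3
  have hXBA : X * (B * A) = 1 := by rw [← mul_assoc]; exact h4
  have hBAX : (B * A) * X = 1 := by rw [mul_assoc]; exact h2
  exact ⟨hXBA, hBAX, ⟨⟨X, B * A, hXBA, hBAX⟩, rfl⟩⟩
end

section
/- Let S be a commutative semiring and n ≥ 1. A matrix X ∈ UT_n(S) is invertible in UT_n(S) if and only if X_{ii} is a multiplicative unit of S for all 1 ≤ i ≤ n and X_{ij} is additively invertible in S for all 1 ≤ i < j ≤ n. -/
section Aux

variable {n : ℕ} {S : Type*} [CommSemiring S]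

/-- Entries of powers of a strictly upper triangular matrix. -/
lemma su_pow_entry {M : Matrix (Fin n) (Fin n) S}
    (h : ∀ i j : Fin n, j ≤ i → M i j = 0) :
    ∀ (k : ℕ) (i j : Fin n), (j : ℕ) < (i : ℕ) + k → (M ^ k) i j = 0 := by
  intro k
  induction k with
  | zero =>
    intro i j hk
    simp only [pow_zero]
    exact Matrix.one_apply_ne (Fin.ne_of_val_ne (by omega))
  | succ k ih =>
    intro i j hk
    rw [pow_succ', Matrix.mul_apply]
    apply Finset.sum_eq_zero
    intro l _
    rcases le_or_gt l i with h1 | h1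
    · rw [h i l h1, zero_mul]
    · rw [ih l j (by have h2 : (i : ℕ) < (l : ℕ) := h1; omega), mul_zero]

lemma su_pow_n {M : Matrix (Fin n) (Fin n) S}
    (h : ∀ i j : Fin n, j ≤ i → M i j = 0) : M ^ n = 0 := by
  ext i j
  rw [su_pow_entry h n i j (by have := j.isLt; omega)]
  rfl

lemma tri_mul_diag {M N : Matrix (Fin n) (Fin n) S}
    (hM : ∀ i j : Fin n, j < i → M i j = 0) (hN : ∀ i j : Fin n, j < i → N i j = 0)
    (i : Fin n) : (M * N) i i = M i i * N i i := by
  rw [Matrix.mul_apply, Finset.sum_eq_single i]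
  · intro k _ hk
    rcases lt_or_gt_of_ne hk with h | h
    · rw [hM i k h, zero_mul]
    · rw [hN k i h, mul_zero]
  · intro h; exact absurd (Finset.mem_univ i) h

end Aux

/-- An upper triangular matrix over a commutative semiring is invertible in `UT_n(S)`
iff its diagonal entries are units and its strictly upper entries are additively
invertible. -/
theorem stmt5 (n : ℕ) (S : Type*) [CommSemiring S] (X : UTsub n S) :
    IsUnit X ↔
      (∀ i : Fin n, IsUnit ((X : Matrix (Fin n) (Fin n) S) i i)) ∧
      (∀ i j : Fin n, i < j → IsAddUnit ((X : Matrix (Fin n) (Fin n) S) i j)) := by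
  constructor
  · rintro ⟨u, rfl⟩
    set A : Matrix (Fin n) (Fin n) S := ((u : UTsub n S) : Matrix (Fin n) (Fin n) S) with hA
    set Y : Matrix (Fin n) (Fin n) S := ((↑u⁻¹ : UTsub n S) : Matrix (Fin n) (Fin n) S) with hY
    have hAtri : ∀ i j : Fin n, j < i → A i j = 0 := (u : UTsub n S).2
    have hYtri : ∀ i j : Fin n, j < i → Y i j = 0 := (↑u⁻¹ : UTsub n S).2
    have hXY : A * Y = 1 := by
      rw [hA, hY, ← MulMemClass.coe_mul, u.mul_inv]; rfl
    have hYX : Y * A = 1 := by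
      rw [hA, hY, ← MulMemClass.coe_mul, u.inv_mul]; rfl
    constructor
    · intro i
      have h1 : (A * Y) i i = 1 := by rw [hXY]; exact Matrix.one_apply_eq i
      rw [tri_mul_diag hAtri hYtri] at h1
      exact IsUnit.of_mul_eq_one _ h1
    · intro i j hij
      have h0 : (A * Y) i j = 0 := by
        rw [hXY]; exact Matrix.one_apply_ne (ne_of_lt hij)
      rw [Matrix.mul_apply] at h0
      rw [← Finset.add_sum_erase _ _ (Finset.mem_univ j)] at h0
      have hau : IsAddUnit (A i j * Y j j) := IsAddUnit.of_add_eq_zero _ h0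
      -- Y j j is a unit
      have h2 : (Y * A) j j = 1 := by rw [hYX]; exact Matrix.one_apply_eq j
      rw [tri_mul_diag hYtri hAtri] at h2
      obtain ⟨w, hw⟩ := (IsUnit.of_mul_eq_one _ h2).exists_right_inv
      have := hau.map (AddMonoidHom.mulRight w)
      simp only [AddMonoidHom.coe_mulRight] at this
      rwa [mul_assoc, hw, mul_one] at this
  · rintro ⟨hd, hu⟩
    set A : Matrix (Fin n) (Fin n) S := (X : Matrix (Fin n) (Fin n) S) with hAdef
    have hAtri : ∀ i j : Fin n, j < i → A i j = 0 := X.2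
    -- the diagonal units
    set d : Fin n → Sˣ := fun i => (hd i).unit with hddef
    have hdval : ∀ i, (d i : S) = A i i := fun i => (hd i).unit_spec
    set B : Matrix (Fin n) (Fin n) S := Matrix.diagonal (fun i => ((d i)⁻¹ : Sˣ)) with hB
    set D : Matrix (Fin n) (Fin n) S := Matrix.diagonal (fun i => (d i : S)) with hD
    have hDB : D * B = 1 := by
      rw [hD, hB, Matrix.diagonal_mul_diagonal]
      simp [Matrix.diagonal_one]
    set M : Matrix (Fin n) (Fin n) S :=
      Matrix.of (fun i j => if i < j then (((d i)⁻¹ : Sˣ) : S) * A i j else 0) with hM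
    have hMsu : ∀ i j : Fin n, j ≤ i → M i j = 0 := by
      intro i j h
      simp only [hM, Matrix.of_apply, if_neg (not_lt.mpr h)]
    have hBA : B * A = 1 + M := by
      ext i j
      rw [hB, Matrix.diagonal_mul]
      rcases lt_trichotomy i j with h | h | h
      · simp [Matrix.one_apply_ne (ne_of_lt h), hM, if_pos h]
      · subst h
        simp [hM, Matrix.one_apply_eq, hdval i]
      · simp [Matrix.one_apply_ne (ne_of_gt h), hM, if_neg (not_lt.mpr h.le),
          hAtri i j h]
    -- additive inverses of entries of M
    have hex : ∀ i j : Fin n, ∃ c : S, M i j + c = 0 := by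
      intro i j
      by_cases h : i < j
      · have : IsAddUnit (M i j) := by
          simp only [hM, Matrix.of_apply, if_pos h]
          exact (hu i j h).map (AddMonoidHom.mulLeft _)
        obtain ⟨v, hv⟩ := this
        exact ⟨↑(-v), by rw [← hv]; exact v.add_neg⟩
      · exact ⟨0, by rw [hMsu i j (not_lt.mp h), add_zero]⟩
    choose M' hM'0 using hex
    set N : Matrix (Fin n) (Fin n) S := Matrix.of M' with hN
    have hMN : M + N = 0 := by
      ext i j; exact hM'0 i j
    have hNsu : ∀ i j : Fin n, j ≤ i → N i j = 0 := by
      intro i j h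
      have := hM'0 i j
      rwa [hMsu i j h, zero_add] at this
    have hNn : N ^ n = 0 := su_pow_n hNsu
    set C : Matrix (Fin n) (Fin n) S := ∑ k ∈ Finset.range n, N ^ k with hC
    have key : (1 : Matrix (Fin n) (Fin n) S) + ∑ k ∈ Finset.range n, N ^ (k + 1) = C := by
      calc (1 : Matrix (Fin n) (Fin n) S) + ∑ k ∈ Finset.range n, N ^ (k + 1)
          = (∑ k ∈ Finset.range n, N ^ (k + 1)) + N ^ 0 := by rw [pow_zero, add_comm]
        _ = ∑ k ∈ Finset.range (n + 1), N ^ k := (Finset.sum_range_succ' (fun k => N ^ k) n).symm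
        _ = (∑ k ∈ Finset.range n, N ^ k) + N ^ n := Finset.sum_range_succ (fun k => N ^ k) n
        _ = C := by rw [hNn, add_zero]
    have hNM : N + M = 0 := by rw [add_comm]; exact hMN
    have hMC : M * C = ∑ k ∈ Finset.range n, M * N ^ k := by
      rw [hC, Finset.mul_sum]
    have hCM : C * M = ∑ k ∈ Finset.range n, N ^ k * M := by
      rw [hC, Finset.sum_mul]
    have h1 : ((1 : Matrix (Fin n) (Fin n) S) + M) * C = 1 := by
      have zeros : ∀ k ∈ Finset.range n, N ^ (k + 1) + M * N ^ k = 0 := by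
        intro k _
        rw [pow_succ', ← add_mul, hNM, zero_mul]
      calc ((1 : Matrix (Fin n) (Fin n) S) + M) * C = C + M * C := by
            rw [add_mul, one_mul]
        _ = C + ∑ k ∈ Finset.range n, M * N ^ k := by rw [hMC]
        _ = 1 + ∑ k ∈ Finset.range n, N ^ (k + 1) + ∑ k ∈ Finset.range n, M * N ^ k := by
            rw [key]
        _ = 1 + ∑ k ∈ Finset.range n, (N ^ (k + 1) + M * N ^ k) := by
            rw [Finset.sum_add_distrib, add_assoc]
        _ = 1 := by rw [Finset.sum_congr rfl zeros]; simp
    have h2 : C * ((1 : Matrix (Fin n) (Fin n) S) + M) = 1 := by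
      have zeros : ∀ k ∈ Finset.range n, N ^ (k + 1) + N ^ k * M = 0 := by
        intro k _
        rw [pow_succ, ← mul_add, hNM, mul_zero]
      calc C * ((1 : Matrix (Fin n) (Fin n) S) + M) = C + C * M := by
            rw [mul_add, mul_one]
        _ = C + ∑ k ∈ Finset.range n, N ^ k * M := by rw [hCM]
        _ = 1 + ∑ k ∈ Finset.range n, N ^ (k + 1) + ∑ k ∈ Finset.range n, N ^ k * M := by
            rw [key]
        _ = 1 + ∑ k ∈ Finset.range n, (N ^ (k + 1) + N ^ k * M) := by
            rw [Finset.sum_add_distrib, add_assoc]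
        _ = 1 := by rw [Finset.sum_congr rfl zeros]; simp
    -- the inverse matrix
    set Y : Matrix (Fin n) (Fin n) S := C * B with hYdef
    have hCtri : C ∈ UTsub n S := by
      intro i j hij
      show (∑ k ∈ Finset.range n, N ^ k) i j = 0
      rw [Matrix.sum_apply]
      apply Finset.sum_eq_zero
      intro k _
      have hNmem : N ∈ UTsub n S := fun i j h => hNsu i j h.le
      exact ((UTsub n S).pow_mem hNmem k) i j hij
    have hBtri : B ∈ UTsub n S := by
      intro i j hij
      exact Matrix.diagonal_apply_ne _ (ne_of_gt hij)
    have hYtri : Y ∈ UTsub n S := (UTsub n S).mul_mem hCtri hBtri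
    have hAY : A * Y = 1 := by
      calc A * (C * B) = (D * B) * A * (C * B) := by rw [hDB, one_mul]
        _ = D * ((B * A) * C) * B := by simp only [mul_assoc]
        _ = D * ((1 + M) * C) * B := by rw [hBA]
        _ = D * B := by rw [h1, mul_one]
        _ = 1 := hDB
    have hYA : Y * A = 1 := by
      rw [hYdef, mul_assoc, hBA, h2]
    refine isUnit_iff_exists.mpr ⟨⟨Y, hYtri⟩, ?_, ?_⟩
    · exact Subtype.ext hAY
    · exact Subtype.ext hYA
end

section
/- Let S be an anti-negative commutative semiring. Then the group of units of UT_n(S) consists exactly of the diagonal matrices whose diagonal entries are units of S, and hence is isomorphic to the direct product U(S)^n. -/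
section Aux
variable {n : ℕ} {S : Type*} [CommSemiring S]

lemma anti_sum (hanti : ∀ x y : S, x + y = 0 → x = 0 ∧ y = 0)
    {ι : Type*} [DecidableEq ι] {s : Finset ι} {f : ι → S} (h : ∑ i ∈ s, f i = 0)
    {i : ι} (hi : i ∈ s) : f i = 0 := by
  have h2 := Finset.add_sum_erase s f hi
  rw [h] at h2
  exact (hanti _ _ h2).1

lemma tri_diag_mul {X Y : Matrix (Fin n) (Fin n) S}
    (hX : ∀ i j : Fin n, j < i → X i j = 0) (hY : ∀ i j : Fin n, j < i → Y i j = 0)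
    (i : Fin n) : (X * Y) i i = X i i * Y i i := by
  rw [Matrix.mul_apply, Finset.sum_eq_single i]
  · intro k _ hk
    rcases lt_or_gt_of_ne hk with h | h
    · rw [hX i k h, zero_mul]
    · rw [hY k i h, mul_zero]
  · intro h; exact absurd (Finset.mem_univ i) h

lemma off_zero (hanti : ∀ x y : S, x + y = 0 → x = 0 ∧ y = 0)
    {X Y : Matrix (Fin n) (Fin n) S}
    (hX : ∀ i j : Fin n, j < i → X i j = 0) (hY : ∀ i j : Fin n, j < i → Y i j = 0)
    (hXY : X * Y = 1) {i j : Fin n} (hij : i ≠ j) : X i j = 0 := by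
  rcases lt_or_gt_of_ne hij with h | h
  · have hdiagj : X j j * Y j j = 1 := by
      have h2 := tri_diag_mul hX hY j
      rw [hXY, Matrix.one_apply_eq] at h2
      exact h2.symm
    have hzero : (X * Y) i j = 0 := by rw [hXY]; exact Matrix.one_apply_ne hij
    rw [Matrix.mul_apply] at hzero
    have hterm : X i j * Y j j = 0 := anti_sum hanti hzero (Finset.mem_univ j)
    calc X i j = X i j * (Y j j * X j j) := by rw [mul_comm (Y j j), hdiagj, mul_one]
    _ = (X i j * Y j j) * X j j := by ring
    _ = 0 := by rw [hterm, zero_mul]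
  · exact hX i j h

lemma unit_mulinv (u : (UTsub n S)ˣ) :
    (((u : UTsub n S) : Matrix (Fin n) (Fin n) S)) *
      (((u⁻¹ : (UTsub n S)ˣ) : UTsub n S) : Matrix (Fin n) (Fin n) S) = 1 := by
  have h := u.mul_inv
  exact congrArg Subtype.val h

lemma unit_diag (u : (UTsub n S)ˣ) (i : Fin n) :
    ((u : UTsub n S) : Matrix (Fin n) (Fin n) S) i i *
      (((u⁻¹ : (UTsub n S)ˣ) : UTsub n S) : Matrix (Fin n) (Fin n) S) i i = 1 := by
  have h2 := tri_diag_mul (u : UTsub n S).2 ((u⁻¹ : (UTsub n S)ˣ) : UTsub n S).2 i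
  rw [unit_mulinv u, Matrix.one_apply_eq] at h2
  exact h2.symm

/-- diagonal matrix of units as element of UTsub -/
def diagM (d : Fin n → Sˣ) : UTsub n S :=
  ⟨Matrix.diagonal (fun i => (d i : S)),
    fun _ j h => Matrix.diagonal_apply_ne _ (ne_of_lt h).symm⟩

lemma diagM_mul (d e : Fin n → Sˣ) : (diagM d) * (diagM e) = diagM (d * e) := by
  apply Subtype.ext
  show Matrix.diagonal _ * Matrix.diagonal _ = Matrix.diagonal _
  rw [Matrix.diagonal_mul_diagonal]
  rfl

lemma diagM_one : (diagM (1 : Fin n → Sˣ) : UTsub n S) = 1 := by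
  apply Subtype.ext
  show Matrix.diagonal _ = (1 : Matrix (Fin n) (Fin n) S)
  simp [Matrix.diagonal_one]

/-- diagonal unit matrix as a unit of UTsub -/
def diagU (d : Fin n → Sˣ) : (UTsub n S)ˣ where
  val := diagM d
  inv := diagM (fun i => (d i)⁻¹)
  val_inv := by rw [diagM_mul]; convert diagM_one using 2; funext i; simp
  inv_val := by rw [diagM_mul]; convert diagM_one using 2; funext i; simp

end Aux

/-- Over an anti-negative commutative semiring, the units of `UT_n(S)` are exactly the
diagonal matrices with unit diagonal entries, and the group of units is isomorphic to
`U(S)^n`. -/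
theorem stmt6 (n : ℕ) (S : Type*) [CommSemiring S]
    (hanti : ∀ x y : S, x + y = 0 → x = 0 ∧ y = 0) :
    (∀ X : UTsub n S, IsUnit X ↔
      ((∀ i j : Fin n, i ≠ j → (X : Matrix (Fin n) (Fin n) S) i j = 0) ∧
       (∀ i : Fin n, IsUnit ((X : Matrix (Fin n) (Fin n) S) i i)))) ∧
    Nonempty ((UTsub n S)ˣ ≃* (Fin n → Sˣ)) := by
  have keyoff : ∀ u : (UTsub n S)ˣ, ∀ i j : Fin n, i ≠ j →
      ((u : UTsub n S) : Matrix (Fin n) (Fin n) S) i j = 0 := by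
    intro u i j hij
    exact off_zero hanti (u : UTsub n S).2 ((u⁻¹ : (UTsub n S)ˣ) : UTsub n S).2
      (unit_mulinv u) hij
  constructor
  · intro X
    constructor
    · rintro ⟨u, rfl⟩
      exact ⟨keyoff u, fun i => IsUnit.of_mul_eq_one _ (unit_diag u i)⟩
    · rintro ⟨hdiag, hunit⟩
      choose y hy using hunit
      have hXd : X = diagM y := by
        apply Subtype.ext
        ext i j
        rcases eq_or_ne i j with rfl | h
        · show (X : Matrix (Fin n) (Fin n) S) i i = Matrix.diagonal _ i i
          rw [Matrix.diagonal_apply_eq, hy i]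
        · show (X : Matrix (Fin n) (Fin n) S) i j = Matrix.diagonal _ i j
          rw [hdiag i j h, Matrix.diagonal_apply_ne _ h]
      exact hXd ▸ (diagU y).isUnit
  · refine ⟨MulEquiv.mk ⟨fun u i => ⟨((u : UTsub n S) : Matrix (Fin n) (Fin n) S) i i,
        (((u⁻¹ : (UTsub n S)ˣ) : UTsub n S) : Matrix (Fin n) (Fin n) S) i i,
        unit_diag u i, by rw [mul_comm]; exact unit_diag u i⟩,
      diagU, ?_, ?_⟩ ?_⟩
    · -- left_inv
      intro u
      apply Units.ext
      apply Subtype.ext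
      show (Matrix.diagonal _ : Matrix (Fin n) (Fin n) S) = _
      ext i j
      rcases eq_or_ne i j with rfl | h
      · rw [Matrix.diagonal_apply_eq]
      · rw [(keyoff u) i j h, Matrix.diagonal_apply_ne _ h]
    · -- right_inv
      intro d
      funext i
      apply Units.ext
      show (Matrix.diagonal (fun i => (d i : S))) i i = (d i : S)
      rw [Matrix.diagonal_apply_eq]
    · -- map_mul
      intro u v
      funext i
      apply Units.ext
      show ((((u*v : (UTsub n S)ˣ) : UTsub n S)) : Matrix (Fin n) (Fin n) S) i i
        = ((u : UTsub n S) : Matrix (Fin n) (Fin n) S) i i *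
          ((v : UTsub n S) : Matrix (Fin n) (Fin n) S) i i
      exact tri_diag_mul (u : UTsub n S).2 (v : UTsub n S).2 i
end

section
/- Let S be a commutative semiring, n ≥ 1, and suppose N_1, …, N_m ∈ UT_n(S) satisfy N_1 ⋯ N_m = E_{ij}(x) for some x ∈ S and indices i < j, where E_{ij}(x) is the unitriangular matrix with (i,j) entry x. Then for every pair k < l with (k,l) ≠ (i,j), the (k,l) entries (N_t)_{kl} are additively invertible for all 1 ≤ t ≤ m. -/
/-- The elementary matrix `E_{ij}(x)`: identity diagonal, `x` in position `(i,j)`,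
`0` elsewhere off the diagonal. -/
def Eelt (n : ℕ) (S : Type*) [CommSemiring S] (i j : Fin n) (x : S) :
    Matrix (Fin n) (Fin n) S :=
  fun k l => if k = l then 1 else if k = i ∧ l = j then x else 0

/-- The diagonal matrix `A_i(y)` with `y` in position `(i,i)` and `1` on the rest of
the diagonal. -/
def Aelt (n : ℕ) (S : Type*) [CommSemiring S] (i : Fin n) (y : S) :
    Matrix (Fin n) (Fin n) S :=
  Matrix.diagonal (fun k => if k = i then y else 1)

section Helpers

variable {n : ℕ} {S : Type*} [CommSemiring S]

/-- Multiplying an additively invertible element by anything is additively invertible. -/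
lemma addUnit_mul {a : S} (c : S) (h : IsAddUnit a) : IsAddUnit (c * a) := by
  obtain ⟨b, hb⟩ := h.exists_neg
  have : c * a + c * b = 0 := by rw [← mul_add, hb, mul_zero]
  exact IsAddUnit.of_add_eq_zero _ this

/-- If a finite sum is additively invertible, so is each summand. -/
lemma addUnit_of_mem_sum {ι : Type*} [DecidableEq ι] {s : Finset ι} {f : ι → S}
    (h : IsAddUnit (∑ a ∈ s, f a)) {a : ι} (ha : a ∈ s) : IsAddUnit (f a) := by
  obtain ⟨z, hz⟩ := h.exists_neg
  have : f a + ((∑ b ∈ s.erase a, f b) + z) = 0 := by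
    rw [← add_assoc, Finset.add_sum_erase _ _ ha, hz]
  exact IsAddUnit.of_add_eq_zero _ this

/-- Upper triangularity predicate. -/
def Tri (M : Matrix (Fin n) (Fin n) S) : Prop := ∀ k l : Fin n, l < k → M k l = 0

lemma tri_one : Tri (1 : Matrix (Fin n) (Fin n) S) := fun _ _ h =>
  Matrix.one_apply_ne h.ne'

lemma tri_mul {M1 M2 : Matrix (Fin n) (Fin n) S} (h1 : Tri M1) (h2 : Tri M2) :
    Tri (M1 * M2) := by
  intro k l h
  rw [Matrix.mul_apply]
  apply Finset.sum_eq_zero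
  intro a _
  rcases lt_or_ge a k with hak | hak
  · rw [h1 k a hak, zero_mul]
  · rw [h2 a l (lt_of_lt_of_le h hak), mul_zero]

lemma tri_prod {L : List (Matrix (Fin n) (Fin n) S)} (hL : ∀ N ∈ L, Tri N) :
    Tri L.prod := by
  induction L with
  | nil => simpa using tri_one
  | cons N T ih =>
    rw [List.prod_cons]
    exact tri_mul (hL N (by simp)) (ih fun M hM => hL M (by simp [hM]))

lemma mul_diag {M1 M2 : Matrix (Fin n) (Fin n) S} (h1 : Tri M1) (h2 : Tri M2)
    (k : Fin n) : (M1 * M2) k k = M1 k k * M2 k k := by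
  rw [Matrix.mul_apply]
  apply Finset.sum_eq_single
  · intro a _ hak
    rcases lt_or_gt_of_ne hak with h | h
    · rw [h1 k a h, zero_mul]
    · rw [h2 a k h, mul_zero]
  · intro h; exact absurd (Finset.mem_univ k) h

end Helpers

/-- If a product of upper triangular matrices over a commutative semiring equals
`E_{ij}(x)` (with `i < j`), then for every pair `k < l` with `(k,l) ≠ (i,j)`, the
`(k,l)` entry of each factor is additively invertible. -/
theorem stmt7 (n : ℕ) (S : Type*) [CommSemiring S]
    (L : List (Matrix (Fin n) (Fin n) S))
    (hL : ∀ N ∈ L, ∀ k l : Fin n, l < k → N k l = 0)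
    (i j : Fin n) (hij : i < j) (x : S) (hprod : L.prod = Eelt n S i j x) :
    ∀ N ∈ L, ∀ k l : Fin n, k < l → (k, l) ≠ (i, j) → IsAddUnit (N k l) := by
  intro N hN k l hkl hne
  obtain ⟨L1, L2, rfl⟩ := List.append_of_mem hN
  have hT : ∀ M ∈ L1 ++ N :: L2, Tri M := hL
  have hP : Tri L1.prod := tri_prod (fun M hM => hT M (by simp [hM]))
  have hN' : Tri N := hT N (by simp)
  have hQ : Tri L2.prod := tri_prod (fun M hM => hT M (by simp [hM]))
  have hNQ : Tri (N * L2.prod) := tri_mul hN' hQ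
  rw [List.prod_append, List.prod_cons] at hprod
  set P := L1.prod with hPdef
  set Q := L2.prod with hQdef
  have hkne : k ≠ l := ne_of_lt hkl
  have hne' : ¬(k = i ∧ l = j) := by simpa [Prod.ext_iff] using hne
  -- diagonal entries of the product are 1
  have hdiag : ∀ a : Fin n, P a a * (N a a * Q a a) = 1 := by
    intro a
    have h := congrFun (congrFun hprod a) a
    rw [mul_diag hP hNQ, mul_diag hN' hQ] at h
    simpa [Eelt] using h
  have hPk : IsUnit (P k k) := IsUnit.of_mul_eq_one _ (hdiag k)
  have hQl : IsUnit (Q l l) :=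
    IsUnit.of_mul_eq_one (a := Q l l) (P l l * N l l) (by rw [← hdiag l]; ring)
  -- the (k,l) entry of the product is 0
  have hzero : (P * (N * Q)) k l = 0 := by
    rw [hprod]
    simp [Eelt, hkne, hne']
  have h1 : IsAddUnit (P k k * (N * Q) k l) := by
    have hs : IsAddUnit (∑ a, P k a * (N * Q) a l) := by
      rw [← Matrix.mul_apply, hzero]; exact isAddUnit_zero
    exact addUnit_of_mem_sum hs (Finset.mem_univ k)
  obtain ⟨p, hp⟩ := hPk.exists_right_inv
  have h2 : IsAddUnit ((N * Q) k l) := by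
    have h := addUnit_mul p h1
    rwa [← mul_assoc, mul_comm p, hp, one_mul] at h
  have h3 : IsAddUnit (N k l * Q l l) := by
    rw [Matrix.mul_apply] at h2
    exact addUnit_of_mem_sum h2 (Finset.mem_univ l)
  obtain ⟨q, hq⟩ := hQl.exists_right_inv
  have h4 := addUnit_mul q h3
  rwa [mul_comm q, mul_assoc, hq, mul_one] at h4
end

section
/- Let m ≥ 1 and let X = {x_1, …, x_m} be a minimal group generating set for Z^m. Then X ∪ {x_0}, where x_0 = x_1^{-1} ⋯ x_m^{-1}, is a minimal semigroup generating set for Z^m; i.e., Z^m is generated as a semigroup by these m+1 elements and cannot be generated as a semigroup by m elements. -/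
/-- Coordinatewise cast `ℤ^m → ℚ^m` as an additive monoid hom. -/
def castHom (m : ℕ) : (Fin m → ℤ) →+ (Fin m → ℚ) where
  toFun v := fun i => (v i : ℚ)
  map_zero' := by ext i; simp
  map_add' a b := by ext i; simp

/-- If `x_1, …, x_m` is a minimal group generating set of `ℤ^m`, then together with
`x_0 = -(x_1 + ⋯ + x_m)` it is a minimal semigroup (monoid) generating set of `ℤ^m`:
it generates, and no set of at most `m` elements generates `ℤ^m` as a semigroup. -/
theorem stmt12 (m : ℕ) (hm : 1 ≤ m) (x : Fin m → (Fin m → ℤ))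
    (hgen : AddSubgroup.closure (Set.range x) = ⊤)
    (hmin : ∀ Y : Finset (Fin m → ℤ),
      AddSubgroup.closure (Y : Set (Fin m → ℤ)) = ⊤ → m ≤ Y.card) :
    AddSubmonoid.closure (Set.range x ∪ {-(∑ i, x i)}) = ⊤ ∧
    ∀ Y : Finset (Fin m → ℤ),
      AddSubmonoid.closure (Y : Set (Fin m → ℤ)) = ⊤ → m + 1 ≤ Y.card := by
  constructor
  · -- Part 1: generation
    set M := AddSubmonoid.closure (Set.range x ∪ {-(∑ i, x i)}) with hM
    have hxM : ∀ j, x j ∈ M := fun j =>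
      AddSubmonoid.subset_closure (Or.inl ⟨j, rfl⟩)
    have hx0M : -(∑ i, x i) ∈ M := AddSubmonoid.subset_closure (Or.inr rfl)
    have hnegM : ∀ j, -(x j) ∈ M := by
      intro j
      have key : -(∑ i, x i) + ∑ i ∈ Finset.univ.erase j, x i = -(x j) := by
        have := Finset.add_sum_erase Finset.univ x (Finset.mem_univ j)
        rw [← this]; abel
      rw [← key]
      exact M.add_mem hx0M (AddSubmonoid.sum_mem M fun i _ => hxM i)
    let H : AddSubgroup (Fin m → ℤ) :=
      { carrier := {g | g ∈ M ∧ -g ∈ M}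
        zero_mem' := ⟨M.zero_mem, by simpa using M.zero_mem⟩
        add_mem' := fun ha hb => ⟨M.add_mem ha.1 hb.1, by
          rw [neg_add]; exact M.add_mem ha.2 hb.2⟩
        neg_mem' := fun ha => ⟨ha.2, by simpa using ha.1⟩ }
    have hle : AddSubgroup.closure (Set.range x) ≤ H := by
      rw [AddSubgroup.closure_le]
      rintro _ ⟨j, rfl⟩
      exact ⟨hxM j, hnegM j⟩
    rw [hgen] at hle
    rw [eq_top_iff]
    intro g _
    exact (hle (AddSubgroup.mem_top g)).1
  · -- Part 2: minimality
    intro Y hY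
    -- Y also generates as a group
    have hYg : AddSubgroup.closure (Y : Set (Fin m → ℤ)) = ⊤ := by
      rw [eq_top_iff]
      intro g _
      have : g ∈ AddSubmonoid.closure (Y : Set (Fin m → ℤ)) := hY ▸ AddSubmonoid.mem_top g
      have hle : AddSubmonoid.closure (Y : Set (Fin m → ℤ)) ≤
          (AddSubgroup.closure (Y : Set (Fin m → ℤ))).toAddSubmonoid :=
        AddSubmonoid.closure_le.mpr AddSubgroup.subset_closure
      exact hle this
    have hge : m ≤ Y.card := hmin Y hYg
    rcases lt_or_eq_of_le hge with h | h
    · exact h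
    -- Now suppose Y.card = m; derive a contradiction.
    exfalso
    set E := castHom m with hE
    -- every vector's image lies in the ℚ-span of E '' Y
    have hspan_mem : ∀ v : Fin m → ℤ, E v ∈ Submodule.span ℚ (E '' (Y : Set (Fin m → ℤ))) := by
      intro v
      have hsub : AddSubgroup.closure (Y : Set (Fin m → ℤ)) ≤
          (Submodule.span ℚ (E '' (Y : Set (Fin m → ℤ)))).toAddSubgroup.comap E := by
        rw [AddSubgroup.closure_le]
        intro y hy
        exact Submodule.subset_span ⟨y, hy, rfl⟩
      rw [hYg] at hsub
      exact hsub (AddSubgroup.mem_top v)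
    -- the images span ℚ^m
    have hspan : ⊤ ≤ Submodule.span ℚ (Set.range fun y : ↥(Y : Set (Fin m → ℤ)) => E (y : Fin m → ℤ)) := by
      have hr : (Set.range fun y : ↥(Y : Set (Fin m → ℤ)) => E (y : Fin m → ℤ))
          = E '' (Y : Set (Fin m → ℤ)) := by
        ext w; constructor
        · rintro ⟨⟨y, hy⟩, rfl⟩; exact ⟨y, hy, rfl⟩
        · rintro ⟨y, hy, rfl⟩; exact ⟨⟨y, hy⟩, rfl⟩
      rw [hr]
      intro w _
      -- w is in span of standard basis, each of which is E of an integer vector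
      have : w ∈ Submodule.span ℚ (Set.range (Pi.basisFun ℚ (Fin m))) := by
        rw [Module.Basis.span_eq]; trivial
      refine Submodule.span_le.mpr ?_ this
      rintro _ ⟨i, rfl⟩
      have hmem := hspan_mem (Pi.single i 1)
      have heq : E (Pi.single i 1) = Pi.basisFun ℚ (Fin m) i := by
        ext j
        simp [hE, castHom, Pi.single_apply, Pi.basisFun_apply]
      rwa [heq] at hmem
    have hcard : Fintype.card ↥(Y : Set (Fin m → ℤ)) = Module.finrank ℚ (Fin m → ℚ) := by
      rw [Module.finrank_fintype_fun_eq_card, Fintype.card_fin]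
      simpa using h.symm
    let b := basisOfTopLeSpanOfCardEqFinrank _ hspan hcard
    have hb : ∀ y : ↥(Y : Set (Fin m → ℤ)), b y = E (y : Fin m → ℤ) := by
      intro y
      rw [coe_basisOfTopLeSpanOfCardEqFinrank]
    -- pick y₀ ∈ Y
    have hYne : (Y : Set (Fin m → ℤ)).Nonempty := by
      rw [Finset.coe_nonempty, ← Finset.card_pos]; omega
    obtain ⟨y₀, hy₀⟩ := hYne
    set f := b.coord ⟨y₀, hy₀⟩ with hf
    -- f is nonnegative on E of everything in the monoid closure
    have hpos : ∀ v : Fin m → ℤ, v ∈ AddSubmonoid.closure (Y : Set (Fin m → ℤ)) →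
        0 ≤ f (E v) := by
      intro v hv
      induction hv using AddSubmonoid.closure_induction with
      | mem y hy =>
        have : E y = b ⟨y, hy⟩ := (hb ⟨y, hy⟩).symm
        rw [this, hf, Module.Basis.coord_apply, Module.Basis.repr_self]
        rw [Finsupp.single_apply]
        split <;> norm_num
      | zero => simp
      | add a c _ _ ha hc =>
        rw [map_add, map_add]
        exact add_nonneg ha hc
    have h1 : f (E y₀) = 1 := by
      rw [show E y₀ = b ⟨y₀, hy₀⟩ from (hb ⟨y₀, hy₀⟩).symm, hf,
        Module.Basis.coord_apply, Module.Basis.repr_self, Finsupp.single_apply]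
      simp
    have hneg : (0 : ℚ) ≤ f (E (-y₀)) := hpos (-y₀) (hY ▸ AddSubmonoid.mem_top _)
    rw [map_neg, map_neg, h1] at hneg
    norm_num at hneg
end

section
/- Let S be an anti-negative semifield in which every element other than 0_S and 1_S has infinite multiplicative order, and suppose (S*,·) is generated by m elements for some finite m. Then (S*,·) is isomorphic to Z^{m'} for some m' ≤ m−1 viewed as a group; in particular (S*,·) is a finitely generated torsion-free abelian group. -/
/-- Let `S` be an anti-negative semifield in which every element other than `0` and `1`
has infinite multiplicative order. If `(S*,·)` is generated (as a monoid) by `m`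
elements, then `(S*,·) ≅ ℤ^{m'}` for some `m' ≤ m - 1`; in particular it is a finitely
generated torsion-free abelian group. -/
theorem stmt13 (S : Type*) [CommSemiring S] (hnt : (0 : S) ≠ 1)
    (hsf : ∀ x : S, x ≠ 0 → IsUnit x)
    (hanti : ∀ x y : S, x + y = 0 → x = 0 ∧ y = 0)
    (hord : ∀ x : S, x ≠ 0 → x ≠ 1 → ∀ k : ℕ, 0 < k → x ^ k ≠ 1)
    (m : ℕ) (g : Fin m → Sˣ)
    (hg : Submonoid.closure (Set.range g) = ⊤) :
    ∃ m' ≤ m - 1, Nonempty (Sˣ ≃* Multiplicative (Fin m' → ℤ)) := by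
  haveI : Nontrivial S := nontrivial_of_ne 0 1 hnt
  set A := Additive Sˣ
  -- torsion-free
  have htf : IsAddTorsionFree A := by
    rw [isAddTorsionFree_iff_not_isOfFinAddOrder]
    intro a ha hfin
    set u : Sˣ := Additive.toMul a with hu
    have hfin' : IsOfFinOrder u := isOfFinAddOrder_ofMul_iff.mp hfin
    obtain ⟨k, hk, hk1⟩ := isOfFinOrder_iff_pow_eq_one.mp hfin'
    have hu1 : (u : S) ≠ 1 := by
      intro h
      exact ha (toMul_eq_one.mp (Units.val_eq_one.mp h))
    refine hord (u : S) (Units.ne_zero u) hu1 k hk ?_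
    rw [← Units.val_pow_eq_pow_val, hk1, Units.val_one]
  haveI : NoZeroSMulDivisors ℤ A := IsAddTorsionFree.to_noZeroSMulDivisors_int
  -- ℕ-closure of images of g in A is everything
  have hclA : AddSubmonoid.closure (Set.range fun i => Additive.ofMul (g i)) = ⊤ := by
    have h1 := congrArg (Submonoid.toAddSubmonoid (M := Sˣ)) hg
    rw [Submonoid.toAddSubmonoid_closure] at h1
    have h2 : Submonoid.toAddSubmonoid (⊤ : Submonoid Sˣ) = ⊤ := rfl
    rw [h2] at h1
    rw [← h1]
    congr 1
  have hspanA : Submodule.span ℤ (Set.range fun i => Additive.ofMul (g i)) = ⊤ := by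
    rw [eq_top_iff]
    intro x _
    have hx : x ∈ (Submodule.span ℕ
        (Set.range fun i => Additive.ofMul (g i))).toAddSubmonoid := by
      rw [Submodule.span_nat_eq_addSubmonoidClosure, hclA]; trivial
    exact Submodule.span_le_restrictScalars ℕ ℤ _ hx
  -- finiteness
  haveI : Module.Finite ℤ A := by
    refine Module.Finite.of_surjective
      ((Fintype.linearCombination ℤ) fun i => Additive.ofMul (g i)) ?_
    rw [← LinearMap.range_eq_top, Fintype.range_linearCombination, hspanA]
  haveI : Module.Free ℤ A := Module.free_of_finite_type_torsion_free'
  -- basis, iso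
  set ι := Module.Free.ChooseBasisIndex ℤ A
  set n := Fintype.card ι with hn
  let b : Module.Basis (Fin n) ℤ A := (Module.Free.chooseBasis ℤ A).reindex (Fintype.equivFin ι)
  let e : A ≃ₗ[ℤ] (Fin n → ℤ) := b.equivFun
  let ψ : Sˣ ≃* Multiplicative (Fin n → ℤ) :=
    (MulEquiv.multiplicativeAdditive Sˣ).symm.trans
      (AddEquiv.toMultiplicative e.toAddEquiv)
  -- images
  set v : Fin m → (Fin n → ℤ) := fun i => e (Additive.ofMul (g i)) with hv
  have himg : (⇑e) '' (Set.range fun i => Additive.ofMul (g i)) = Set.range v := by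
    ext x; simp [hv]
  have hspanv : Submodule.span ℤ (Set.range v) = ⊤ := by
    rw [← himg, ← LinearEquiv.coe_coe, ← Submodule.map_span, hspanA, Submodule.map_top]
    exact LinearMap.range_eq_top.mpr e.surjective
  have himg' : (⇑(e : A →ₗ[ℤ] (Fin n → ℤ)).toAddMonoidHom) ''
      (Set.range fun i => Additive.ofMul (g i)) = Set.range v := himg
  have h2 : AddSubmonoid.map (e : A →ₗ[ℤ] (Fin n → ℤ)).toAddMonoidHom ⊤ = ⊤ := by
    rw [eq_top_iff]; rintro x -
    exact ⟨e.symm x, trivial, by simp⟩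
  have hclv : AddSubmonoid.closure (Set.range v) = ⊤ := by
    rw [← himg', ← AddMonoidHom.map_mclosure, hclA, h2]
  -- linear map
  set L : (Fin m → ℤ) →ₗ[ℤ] (Fin n → ℤ) := (Fintype.linearCombination ℤ) v with hL
  have hLsurj : Function.Surjective L := by
    rw [← LinearMap.range_eq_top, hL, Fintype.range_linearCombination, hspanv]
  -- rank bound : n ≤ m
  have hnm : n ≤ m := by
    have := LinearMap.rank_le_of_surjective L hLsurj
    rw [rank_fun', rank_fun', Fintype.card_fin, Fintype.card_fin] at this
    exact_mod_cast this
  by_cases hcase : n ≤ m - 1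
  · exact ⟨n, hcase, ⟨ψ⟩⟩
  · exfalso
    have hn0 : 0 < n := by
      rcases Nat.eq_zero_or_pos n with h | h
      · exact absurd (h ▸ Nat.zero_le _) hcase
      · exact h
    have heq : n = m := le_antisymm hnm (by omega)
    have hmem : (-(∑ i, v i)) ∈ (Submodule.span ℕ (Set.range v)).toAddSubmonoid := by
      rw [Submodule.span_nat_eq_addSubmonoidClosure, hclv]; trivial
    obtain ⟨c, hc⟩ := (Submodule.mem_span_range_iff_exists_fun ℕ).mp hmem
    have hLc : L (fun i => (c i : ℤ) + 1) = 0 := by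
      have h3 : L (fun i => (c i : ℤ) + 1) = (∑ i, (c i : ℤ) • v i) + ∑ i, v i := by
        simp [hL, Fintype.linearCombination_apply, add_smul, Finset.sum_add_distrib]
      rw [h3]
      have h4 : (∑ i, (c i : ℤ) • v i) = ∑ i, c i • v i := by
        simp [natCast_zsmul]
      rw [h4, hc]
      simp
    let E : (Fin n → ℤ) ≃ₗ[ℤ] (Fin m → ℤ) := LinearEquiv.funCongrLeft ℤ ℤ (finCongr heq.symm)
    have hinj : Function.Injective (E.toLinearMap ∘ₗ L) :=
      OrzechProperty.injective_of_surjective_endomorphism _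
        (E.surjective.comp hLsurj)
    have h0 : (E.toLinearMap ∘ₗ L) (fun i => (c i : ℤ) + 1) = (E.toLinearMap ∘ₗ L) 0 := by
      simp [LinearMap.comp_apply, hLc]
    have h5 := hinj h0
    have h1 : ((c ⟨0, heq ▸ hn0⟩ : ℤ) + 1) = 0 := by
      have := congrFun h5 ⟨0, heq ▸ hn0⟩
      simpa using this
    omega
end

section
/- In M_3(Z_max), for each s ∈ Z the matrix X_s with zero diagonal entries equal to −∞, all off-diagonal entries 0, except the (1,3) entry equal to s, is prime: whenever X_s = AB with A, B ∈ M_3(Z_max), exactly one of A, B is invertible. -/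
noncomputable instance : LinearOrderedAddCommMonoidWithTop (WithBot ℤ)ᵒᵈ where
  __ : AddCommMonoid (WithBot ℤ)ᵒᵈ := inferInstance
  __ : LinearOrder (WithBot ℤ)ᵒᵈ := inferInstance
  __ : IsOrderedAddMonoid (WithBot ℤ)ᵒᵈ := inferInstance
  le_top a := bot_le (α := WithBot ℤ) (a := OrderDual.ofDual a)
  top_add' a := WithBot.bot_add (OrderDual.ofDual a)
  isAddLeftRegular_of_ne_top x hx _ _ h := WithBot.add_left_cancel (x := OrderDual.ofDual x) hx h

/-- The tropical integers `ℤ_max = ℤ ∪ {-∞}` with addition `max` and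
multiplication `+`. -/
abbrev Zmax := Tropical (WithBot ℤ)ᵒᵈ

/-- The element of `ℤ_max` corresponding to the integer `z`. -/
noncomputable def tz (z : ℤ) : Zmax := Tropical.trop (OrderDual.toDual (z : WithBot ℤ))

/-- The matrix `X_s`: diagonal entries `-∞`, `(1,3)` entry `s`, all other entries `0`. -/
noncomputable def Xmat (s : ℤ) : Matrix (Fin 3) (Fin 3) Zmax :=
  fun i j => if i = j then 0 else if i = 0 ∧ j = 2 then tz s else 1

/-! ### Basic facts about `Zmax` -/

lemma zmax_eq_zero_iff {a : Zmax} :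
    a = 0 ↔ OrderDual.ofDual (Tropical.untrop a) = (⊥ : WithBot ℤ) := by
  constructor
  · rintro rfl; rfl
  · intro h
    have h' : Tropical.untrop a = (⊤ : (WithBot ℤ)ᵒᵈ) := h
    rw [← Tropical.trop_untrop a, h', Tropical.trop_top]

lemma zmax_mul_eq_zero {a b : Zmax} : a * b = 0 ↔ a = 0 ∨ b = 0 := by
  rw [zmax_eq_zero_iff, zmax_eq_zero_iff, zmax_eq_zero_iff]
  show OrderDual.ofDual (Tropical.untrop a) + OrderDual.ofDual (Tropical.untrop b) = ⊥ ↔ _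
  exact WithBot.add_eq_bot

lemma zmax_add_eq_zero {a b : Zmax} : a + b = 0 ↔ a = 0 ∧ b = 0 := by
  constructor
  · intro h
    rcases Tropical.add_eq_iff.mp h with ⟨rfl, hle⟩ | ⟨rfl, hle⟩
    · exact ⟨rfl, le_antisymm (Tropical.le_zero b) hle⟩
    · exact ⟨le_antisymm (Tropical.le_zero a) hle, rfl⟩
  · rintro ⟨rfl, rfl⟩; simp

lemma tz_ne_zero (z : ℤ) : tz z ≠ 0 := fun h =>
  WithBot.coe_ne_bot (zmax_eq_zero_iff.mp h)

lemma zmax_one_ne_zero : (1 : Zmax) ≠ 0 := tz_ne_zero 0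

lemma zmax_isUnit {a : Zmax} (h : a ≠ 0) : IsUnit a := by
  obtain ⟨z, hz⟩ := WithBot.ne_bot_iff_exists.mp (fun hb => h (zmax_eq_zero_iff.mpr hb))
  have ha : Tropical.untrop a = OrderDual.toDual ((z : ℤ) : WithBot ℤ) := by
    apply OrderDual.ofDual.injective; exact hz.symm
  refine isUnit_iff_exists.mpr ⟨tz (-z), ?_, ?_⟩
  · show Tropical.trop (Tropical.untrop a + OrderDual.toDual ((-z : ℤ) : WithBot ℤ)) = 1
    rw [ha]
    show Tropical.trop (OrderDual.toDual (((z : ℤ) : WithBot ℤ) + ((-z : ℤ) : WithBot ℤ))) = 1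
    rw [← WithBot.coe_add, add_neg_cancel]
    rfl
  · show Tropical.trop (OrderDual.toDual ((-z : ℤ) : WithBot ℤ) + Tropical.untrop a) = 1
    rw [ha]
    show Tropical.trop (OrderDual.toDual (((-z : ℤ) : WithBot ℤ) + ((z : ℤ) : WithBot ℤ))) = 1
    rw [← WithBot.coe_add, neg_add_cancel]
    rfl

/-! ### The combinatorial core -/

lemma third_exists : ∀ a b : Fin 3, a ≠ b → ∃ c, c ≠ a ∧ c ≠ b ∧ ∀ d, d ≠ a → d ≠ b → d = c := by
  decide

lemma exists_ne_fin3 : ∀ i : Fin 3, ∃ j, j ≠ i := by decide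

lemma keyP (S T : Fin 3 → Fin 3 → Prop)
    (H : ∀ i j, (∃ k, S i k ∧ T k j) ↔ i ≠ j) :
    ((∀ i, ∃! j, S i j) ∧ (∀ j, ∃! i, S i j)) ∨ ((∀ i, ∃! j, T i j) ∧ (∀ j, ∃! i, T i j)) := by
  classical
  have F1 : ∀ i k, S i k → ¬ T k i := fun i k hs ht => (H i i).mp ⟨k, hs, ht⟩ rfl
  have F2 : ∀ i j, i ≠ j → ∃ k, S i k ∧ T k j := fun i j h => (H i j).mpr h
  by_cases hS : ∀ i k k', S i k → S i k' → k = k'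
  · left
    have hne : ∀ i, ∃ k, S i k := by
      intro i
      obtain ⟨j, hj⟩ := exists_ne_fin3 i
      obtain ⟨k, hk, -⟩ := F2 i j (Ne.symm hj)
      exact ⟨k, hk⟩
    choose σ hσ using hne
    have hrow : ∀ i j, S i j → j = σ i := fun i j h => hS i j (σ i) h (hσ i)
    have hT : ∀ i j, j ≠ i → T (σ i) j := by
      intro i j hji
      obtain ⟨k, hk, ht⟩ := F2 i j (Ne.symm hji)
      rwa [hrow i k hk] at ht
    have hinj : Function.Injective σ := by
      intro i i' h
      by_contra hne'
      exact F1 i' (σ i') (hσ i') (h ▸ hT i i' (Ne.symm hne'))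
    refine ⟨fun i => ⟨σ i, hσ i, fun j h => hrow i j h⟩, fun k => ?_⟩
    obtain ⟨i0, hi0⟩ := Finite.surjective_of_injective hinj k
    exact ⟨i0, hi0 ▸ hσ i0, fun i hi => hinj ((hrow i k hi).symm.trans hi0.symm)⟩
  · by_cases hT2 : ∀ j k k', T k j → T k' j → k = k'
    · right
      have hne : ∀ j, ∃ k, T k j := by
        intro j
        obtain ⟨i, hi⟩ := exists_ne_fin3 j
        obtain ⟨k, -, hk⟩ := F2 i j hi
        exact ⟨k, hk⟩
      choose τ hτ using hne
      have hcol : ∀ j k, T k j → k = τ j := fun j k h => hT2 j k (τ j) h (hτ j)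
      have hS2 : ∀ j i, i ≠ j → S i (τ j) := by
        intro j i hij
        obtain ⟨k, hs, ht⟩ := F2 i j hij
        rwa [hcol j k ht] at hs
      have hnS : ∀ j, ¬ S j (τ j) := fun j h => F1 j (τ j) h (hτ j)
      have hinj : Function.Injective τ := by
        intro j j' h
        by_contra hne'
        exact hnS j (h ▸ hS2 j' j hne')
      constructor
      · intro k
        obtain ⟨j0, hj0⟩ := Finite.surjective_of_injective hinj k
        exact ⟨j0, hj0 ▸ hτ j0, fun j' h => hinj ((hcol j' k h).symm.trans hj0.symm)⟩
      · exact fun j => ⟨τ j, hτ j, fun k h => hcol j k h⟩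
    · exfalso
      push_neg at hS hT2
      obtain ⟨i0, k1, k2, hk1, hk2, hk12⟩ := hS
      obtain ⟨j0, l1, l2, hl1, hl2, hl12⟩ := hT2
      obtain ⟨m, hm1, hm2, hmu⟩ := third_exists k1 k2 hk12
      obtain ⟨l3, hl31, hl32, hl3u⟩ := third_exists l1 l2 hl12
      have hcolI : ∀ k, T k i0 → k = m := by
        intro k hk
        refine hmu k (fun h => ?_) (fun h => ?_)
        · exact F1 i0 k1 hk1 (h ▸ hk)
        · exact F1 i0 k2 hk2 (h ▸ hk)
      have hrowJ : ∀ k, S j0 k → k = l3 := by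
        intro k hk
        refine hl3u k (fun h => ?_) (fun h => ?_)
        · exact F1 j0 l1 (h ▸ hk) hl1
        · exact F1 j0 l2 (h ▸ hk) hl2
      have hij : i0 ≠ j0 := by
        rintro rfl
        exact hk12 ((hrowJ k1 hk1).trans (hrowJ k2 hk2).symm)
      have hlm : l3 = m := by
        obtain ⟨k, hs, ht⟩ := F2 j0 i0 (Ne.symm hij)
        rw [← hrowJ k hs]
        exact hcolI k ht
      obtain ⟨p, hpi, hpj, -⟩ := third_exists i0 j0 hij
      have hSpm : S p m := by
        obtain ⟨k, hs, ht⟩ := F2 p i0 hpi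
        rwa [hcolI k ht] at hs
      have hTmp : T m p := by
        obtain ⟨k, hs, ht⟩ := F2 j0 p (Ne.symm hpj)
        rwa [hrowJ k hs, hlm] at ht
      exact F1 p m hSpm hTmp

/-! ### Monomial matrices are units -/

lemma isUnit_of_perm (A : Matrix (Fin 3) (Fin 3) Zmax)
    (h1 : ∀ i, ∃! j, A i j ≠ 0) (h2 : ∀ j, ∃! i, A i j ≠ 0) : IsUnit A := by
  classical
  choose σ hσ hσu using h1
  have hinj : Function.Injective σ := by
    intro i i' h
    exact ExistsUnique.unique (h2 (σ i)) (hσ i) (h ▸ hσ i')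
  have hsurj : Function.Surjective σ := Finite.surjective_of_injective hinj
  have hu : ∀ i, IsUnit (A i (σ i)) := fun i => zmax_isUnit (hσ i)
  set C : Matrix (Fin 3) (Fin 3) Zmax :=
    Matrix.of fun k i' => if k = σ i' then ((hu i').unit⁻¹ : Zmaxˣ) else 0 with hC
  have hAC : A * C = 1 := by
    ext i i'
    rw [Matrix.mul_apply]
    simp only [hC, Matrix.of_apply, mul_ite, mul_zero, Finset.sum_ite_eq', Finset.mem_univ,
      if_pos]
    by_cases h : i = i'
    · subst h
      rw [Matrix.one_apply_eq]
      exact (hu i).mul_val_inv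
    · rw [Matrix.one_apply_ne h]
      have hz : A i (σ i') = 0 := by
        by_contra hz
        exact h (hinj (hσu i (σ i') hz)).symm
      rw [hz, zero_mul]
  have hCA : C * A = 1 := by
    ext j j'
    rw [Matrix.mul_apply]
    obtain ⟨k0, hk0⟩ := hsurj j
    rw [Finset.sum_eq_single k0]
    · simp only [hC, Matrix.of_apply, if_pos hk0.symm]
      by_cases h : j = j'
      · subst h
        rw [Matrix.one_apply_eq, ← hk0]
        exact (hu k0).val_inv_mul
      · rw [Matrix.one_apply_ne h]
        have hz : A k0 j' = 0 := by
          by_contra hz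
          exact h ((hσu k0 j' hz).trans hk0).symm
        rw [hz, mul_zero]
    · intro k _ hk
      simp only [hC, Matrix.of_apply]
      rw [if_neg, zero_mul]
      intro h
      exact hk (hinj (hk0.trans h).symm)
    · intro h
      exact absurd (Finset.mem_univ k0) h
  exact ⟨⟨A, C, hAC, hCA⟩, rfl⟩

/-! ### Entries of `Xmat` -/

lemma Xmat_ne_zero {s : ℤ} {i j : Fin 3} (h : i ≠ j) : Xmat s i j ≠ 0 := by
  unfold Xmat
  rw [if_neg h]
  split_ifs
  · exact tz_ne_zero s
  · exact zmax_one_ne_zero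

lemma Xmat_diag {s : ℤ} (i : Fin 3) : Xmat s i i = 0 := by
  unfold Xmat
  rw [if_pos rfl]

lemma Xmat_entry_ne_iff {s : ℤ} (i j : Fin 3) : Xmat s i j ≠ 0 ↔ i ≠ j := by
  constructor
  · intro h hij
    exact h (hij ▸ Xmat_diag i)
  · exact Xmat_ne_zero

/-! ### `Xmat` is not a unit -/

lemma Xmat_not_isUnit (s : ℤ) : ¬ IsUnit (Xmat s) := by
  intro h
  obtain ⟨U, hU⟩ := h
  have hXC : Xmat s * (U⁻¹).val = 1 := by
    rw [← hU]; exact U.mul_inv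
  set C : Matrix (Fin 3) (Fin 3) Zmax := (U⁻¹).val with hCdef
  have hx10 : Xmat s 1 0 = 1 := by simp [Xmat]
  have hx12 : Xmat s 1 2 = 1 := by simp [Xmat]
  have hx20 : Xmat s 2 0 = 1 := by simp [Xmat]
  have hx21 : Xmat s 2 1 = 1 := by simp [Xmat]
  have hx01 : Xmat s 0 1 = 1 := by simp [Xmat]
  have hx02 : Xmat s 0 2 = tz s := by simp [Xmat]
  have e10 := congrFun (congrFun hXC 1) 0
  have e20 := congrFun (congrFun hXC 2) 0
  have e00 := congrFun (congrFun hXC 0) 0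
  rw [Matrix.mul_apply, Fin.sum_univ_three, hx10, Xmat_diag, hx12, one_mul, zero_mul, one_mul,
    add_zero, Matrix.one_apply_ne (by decide : (1 : Fin 3) ≠ 0)] at e10
  obtain ⟨h00, h20⟩ := zmax_add_eq_zero.mp e10
  rw [Matrix.mul_apply, Fin.sum_univ_three, hx20, hx21, Xmat_diag, one_mul, one_mul, zero_mul,
    add_zero, Matrix.one_apply_ne (by decide : (2 : Fin 3) ≠ 0)] at e20
  obtain ⟨-, h10⟩ := zmax_add_eq_zero.mp e20
  rw [Matrix.mul_apply, Fin.sum_univ_three, Xmat_diag, hx01, hx02, zero_mul, one_mul, h10, h20,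
    mul_zero, add_zero, add_zero, Matrix.one_apply_eq] at e00
  exact zmax_one_ne_zero e00.symm

/-! ### Supports -/

lemma supp_iff {s : ℤ} {A B : Matrix (Fin 3) (Fin 3) Zmax} (hAB : A * B = Xmat s) :
    ∀ i j, (∃ k, A i k ≠ 0 ∧ B k j ≠ 0) ↔ i ≠ j := by
  intro i j
  have hz : (A * B) i j = 0 ↔ ∀ k, A i k * B k j = 0 := by
    rw [Matrix.mul_apply, Fin.sum_univ_three, zmax_add_eq_zero, zmax_add_eq_zero]
    constructor
    · rintro ⟨⟨h0, h1⟩, h2⟩ k; fin_cases k <;> assumption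
    · intro h; exact ⟨⟨h 0, h 1⟩, h 2⟩
  rw [← Xmat_entry_ne_iff (s := s) i j, ← hAB]
  constructor
  · rintro ⟨k, hA, hB⟩ h0
    exact (zmax_mul_eq_zero.mp (hz.mp h0 k)).elim hA hB
  · intro h
    by_contra hne
    push_neg at hne
    refine h (hz.mpr fun k => ?_)
    rcases Classical.em (A i k = 0) with h' | h'
    · exact zmax_mul_eq_zero.mpr (Or.inl h')
    · exact zmax_mul_eq_zero.mpr (Or.inr (hne k h'))

/-- Each `X_s` is prime in `M_3(ℤ_max)`: it is not a unit, and in any factorization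
`X_s = A * B` exactly one of `A`, `B` is a unit. -/
theorem stmt14 (s : ℤ) :
    ¬ IsUnit (Xmat s) ∧
    ∀ A B : Matrix (Fin 3) (Fin 3) Zmax, A * B = Xmat s →
      Xor' (IsUnit A) (IsUnit B) := by
  refine ⟨Xmat_not_isUnit s, fun A B hAB => ?_⟩
  rcases keyP (fun i k => A i k ≠ 0) (fun k j => B k j ≠ 0) (supp_iff hAB)
    with ⟨h1, h2⟩ | ⟨h1, h2⟩
  · have hA := isUnit_of_perm A h1 h2
    exact Or.inl ⟨hA, fun hB => Xmat_not_isUnit s (hAB ▸ hA.mul hB)⟩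
  · have hB := isUnit_of_perm B h1 h2
    exact Or.inr ⟨hB, fun hA => Xmat_not_isUnit s (hAB ▸ hA.mul hB)⟩
end

section
/- In M_3(Z_max), if X_s and X_t (s, t ∈ Z) are J-related, then t = s or t + s = 0 (i.e., ts = 1 tropically). Consequently, the matrices X_s for s ∈ N_0 lie in pairwise distinct J-classes except for the identification s ↔ −s. -/
lemma one_eq_tz : (1 : Zmax) = tz 0 := by
  apply Tropical.untrop_injective
  rw [Tropical.untrop_one]
  rfl

lemma tz_inj {a b : ℤ} (h : tz a = tz b) : a = b := by
  have := congrArg Tropical.untrop h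
  have h2 : ((a : ℤ) : WithBot ℤ) = ((b : ℤ) : WithBot ℤ) := this
  exact_mod_cast h2

lemma tz_mul (a b : ℤ) : tz a * tz b = tz (a + b) := by
  apply Tropical.untrop_injective
  rw [Tropical.untrop_mul]
  show ((a : WithBot ℤ) + (b : WithBot ℤ)) = (((a + b : ℤ) : WithBot ℤ))
  exact_mod_cast rfl

lemma zmax_add_eq_zero_s15 {x y : Zmax} (h : x + y = 0) : x = 0 ∧ y = 0 := by
  have := congrArg Tropical.untrop h
  rw [Tropical.untrop_add, Tropical.untrop_zero] at this
  have h2 := min_eq_top.mp this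
  exact ⟨Tropical.untrop_injective (by rw [h2.1, Tropical.untrop_zero]),
         Tropical.untrop_injective (by rw [h2.2, Tropical.untrop_zero])⟩

lemma zmax_mul_eq_zero_s15 {x y : Zmax} (h : x * y = 0) : x = 0 ∨ y = 0 := by
  have := congrArg Tropical.untrop h
  rw [Tropical.untrop_mul, Tropical.untrop_zero] at this
  have h3 : OrderDual.ofDual (Tropical.untrop x) + OrderDual.ofDual (Tropical.untrop y) = (⊥ : WithBot ℤ) := this
  have h2 := WithBot.add_eq_bot.mp h3
  rcases h2 with h2 | h2
  · exact Or.inl (Tropical.untrop_injective h2)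
  · exact Or.inr (Tropical.untrop_injective h2)

lemma zmax_ne_zero {x : Zmax} (h : x ≠ 0) : ∃ m : ℤ, x = tz m := by
  have : Tropical.untrop x ≠ (⊥ : WithBot ℤ) := by
    intro hb; exact h (Tropical.untrop_injective hb)
  obtain ⟨m, hm⟩ := WithBot.ne_bot_iff_exists.mp this
  exact ⟨m, Tropical.untrop_injective hm.symm⟩

lemma Xdiag (u : ℤ) (i : Fin 3) : Xmat u i i = 0 := if_pos rfl

lemma Xoff (u : ℤ) {i j : Fin 3} (h : i ≠ j) :
    Xmat u i j = tz (if i = 0 ∧ j = 2 then u else 0) := by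
  unfold Xmat
  rw [if_neg h]
  split_ifs with h2
  · rfl
  · exact one_eq_tz

lemma Xne (u : ℤ) {i j : Fin 3} (h : i ≠ j) : Xmat u i j ≠ 0 := by
  rw [Xoff u h]; exact tz_ne_zero _

set_option maxHeartbeats 1000000 in
lemma arith (s t : ℤ) (c : Fin 3 → Fin 3)
    (hne01 : c 0 ≠ c 1) (hne02 : c 0 ≠ c 2) (hne12 : c 1 ≠ c 2)
    (α β : Fin 3 → ℤ)
    (key2 : ∀ i j : Fin 3, i ≠ j →
      α i + ((if c i = 0 ∧ c j = 2 then s else 0) + β j)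
        = (if i = 0 ∧ j = 2 then t else 0)) :
    t = s ∨ t + s = 0 := by
  have h01 := key2 0 1 (by decide)
  have h02 := key2 0 2 (by decide)
  have h10 := key2 1 0 (by decide)
  have h12 := key2 1 2 (by decide)
  have h20 := key2 2 0 (by decide)
  have h21 := key2 2 1 (by decide)
  clear key2
  have b0 := (c 0).isLt
  have b1 := (c 1).isLt
  have b2 := (c 2).isLt
  simp only [Fin.ext_iff, Fin.isValue, show ((2:Fin 3)).val = 2 from rfl,
    show ((1:Fin 3)).val = 1 from rfl, show ((0:Fin 3)).val = 0 from rfl,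
    show ((0:ℕ) = 0) = True from by simp, show ((1:ℕ) = 0) = False from by simp,
    show ((2:ℕ) = 0) = False from by simp, show ((0:ℕ) = 2) = False from by simp,
    show ((1:ℕ) = 2) = False from by simp, show ((2:ℕ) = 2) = True from by simp,
    true_and, false_and, and_true, and_false, if_true, if_false, zero_add, add_zero]
    at h01 h02 h10 h12 h20 h21 hne01 hne02 hne12
  split_ifs at h01 h02 h10 h12 h20 h21 <;> omega

set_option maxHeartbeats 1000000 in
lemma key (s t : ℤ) (A B : Matrix (Fin 3) (Fin 3) Zmax)
    (h : A * Xmat s * B = Xmat t) : t = s ∨ t + s = 0 := by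
  classical
  set P := A * Xmat s with hPdef
  set Q := Xmat s * B with hQdef
  have hP : ∀ (i k : Fin 3),
      P i k = A i 0 * Xmat s 0 k + A i 1 * Xmat s 1 k + A i 2 * Xmat s 2 k := by
    intro i k
    rw [hPdef, Matrix.mul_apply, Fin.sum_univ_three]
  have hQ : ∀ (k j : Fin 3),
      Q k j = Xmat s k 0 * B 0 j + Xmat s k 1 * B 1 j + Xmat s k 2 * B 2 j := by
    intro k j
    rw [hQdef, Matrix.mul_apply, Fin.sum_univ_three]
  have HPB : ∀ i j, P i 0 * B 0 j + P i 1 * B 1 j + P i 2 * B 2 j = Xmat t i j := by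
    intro i j
    rw [← Fin.sum_univ_three (fun k => P i k * B k j), ← Matrix.mul_apply, h]
  have hAQ : A * Q = Xmat t := by
    rw [hQdef, ← mul_assoc, ← hPdef]; exact h
  have HAQ : ∀ i j, A i 0 * Q 0 j + A i 1 * Q 1 j + A i 2 * Q 2 j = Xmat t i j := by
    intro i j
    rw [← Fin.sum_univ_three (fun k => A i k * Q k j), ← Matrix.mul_apply, hAQ]
  -- diagonal conditions
  have Hdiag : ∀ i k, P i k * B k i = 0 := by
    intro i k
    have h0 := HPB i i
    rw [Xdiag t i] at h0
    obtain ⟨h1, h2⟩ := zmax_add_eq_zero_s15 h0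
    obtain ⟨h3, h4⟩ := zmax_add_eq_zero_s15 h1
    fin_cases k <;> assumption
  have HdiagA : ∀ i k, A i k * Q k i = 0 := by
    intro i k
    have h0 := HAQ i i
    rw [Xdiag t i] at h0
    obtain ⟨h1, h2⟩ := zmax_add_eq_zero_s15 h0
    obtain ⟨h3, h4⟩ := zmax_add_eq_zero_s15 h1
    fin_cases k <;> assumption
  -- off-diagonal existence
  have Hoff : ∀ i j, i ≠ j → ∃ k, P i k ≠ 0 ∧ B k j ≠ 0 := by
    intro i j hij
    by_contra hc
    push_neg at hc
    have hz : ∀ k, P i k * B k j = 0 := by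
      intro k
      by_cases hk : P i k = 0
      · rw [hk, zero_mul]
      · rw [hc k hk, mul_zero]
    have h0 := HPB i j
    rw [hz 0, hz 1, hz 2, add_zero, add_zero] at h0
    exact Xne t hij h0.symm
  -- terms of P entries
  have Pterm : ∀ i k, P i k = 0 → ∀ l, A i l * Xmat s l k = 0 := by
    intro i k hk l
    rw [hP i k] at hk
    obtain ⟨h1, h2⟩ := zmax_add_eq_zero_s15 hk
    obtain ⟨h3, h4⟩ := zmax_add_eq_zero_s15 h1
    fin_cases l <;> assumption
  -- a row of P with two zeros is entirely zero
  have Prow : ∀ i k k', k ≠ k' → P i k = 0 → P i k' = 0 → ∀ k'', P i k'' = 0 := by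
    intro i k k' hkk' h1 h2 k''
    have hA : ∀ l, A i l = 0 := by
      intro l
      have pick : ∃ m, l ≠ m ∧ P i m = 0 := by
        by_cases hlk : l = k
        · exact ⟨k', by rw [hlk]; exact hkk', h2⟩
        · exact ⟨k, hlk, h1⟩
      obtain ⟨m, hlm, hm⟩ := pick
      rcases zmax_mul_eq_zero_s15 (Pterm i m hm l) with hz | hz
      · exact hz
      · exact absurd hz (Xne s hlm)
    rw [hP i k'', hA 0, hA 1, hA 2, zero_mul, zero_mul, zero_mul, add_zero, add_zero]
  -- column support of B
  have hcol : ∀ j : Fin 3,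
      ∃ k, B k j ≠ 0 ∧ P j k = 0 ∧ ∀ k', k' ≠ k → B k' j = 0 := by
    intro j
    obtain ⟨i, hij⟩ := exists_ne j
    obtain ⟨k, hPk, hBk⟩ := Hoff i j hij
    have hPjk : P j k = 0 := by
      rcases zmax_mul_eq_zero_s15 (Hdiag j k) with h' | h'
      · exact h'
      · exact absurd h' hBk
    refine ⟨k, hBk, hPjk, ?_⟩
    intro k' hk'
    by_contra hB'
    have hPjk' : P j k' = 0 := by
      rcases zmax_mul_eq_zero_s15 (Hdiag j k') with h' | h'
      · exact h'
      · exact absurd h' hB'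
    have hall := Prow j k' k hk' hPjk' hPjk
    obtain ⟨m, hm⟩ := exists_ne j
    obtain ⟨k'', hk''⟩ := Hoff j m (Ne.symm hm)
    exact hk''.1 (hall k'')
  choose c hBne hPc hBzero using hcol
  -- injectivity of c
  have hcinj : ∀ i j, i ≠ j → c i ≠ c j := by
    intro i j hij heq
    obtain ⟨k, hPk, hBk⟩ := Hoff i j hij
    have hk : k = c j := by
      by_contra hk
      exact hBk (hBzero j k hk)
    rw [hk, ← heq] at hPk
    exact hPk (hPc i)
  -- Q entries away from c j are nonzero
  have hQc : ∀ j k, k ≠ c j → Q k j ≠ 0 := by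
    intro j k hk h0
    rw [hQ k j] at h0
    obtain ⟨h1, h2⟩ := zmax_add_eq_zero_s15 h0
    obtain ⟨h3, h4⟩ := zmax_add_eq_zero_s15 h1
    have hterm : ∀ l, Xmat s k l * B l j = 0 := by
      intro l; fin_cases l <;> assumption
    rcases zmax_mul_eq_zero_s15 (hterm (c j)) with h' | h'
    · exact Xne s hk h'
    · exact hBne j h'
  -- rows of A are supported at c i
  have hA0 : ∀ i k, k ≠ c i → A i k = 0 := by
    intro i k hk
    rcases zmax_mul_eq_zero_s15 (HdiagA i k) with h' | h'
    · exact h'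
    · exact absurd h' (hQc i k hk)
  -- Q k j = Xmat s k (c j) * B (c j) j
  have E2 : ∀ k j, Q k j = Xmat s k (c j) * B (c j) j := by
    intro k j
    rw [hQ k j]
    have h0 : ∀ l, l ≠ c j → Xmat s k l * B l j = 0 := fun l hl => by
      rw [hBzero j l hl, mul_zero]
    obtain ⟨cj, hcj⟩ : ∃ x, c j = x := ⟨_, rfl⟩
    rw [hcj] at h0 ⊢
    fin_cases cj
    · rw [h0 1 (by decide), h0 2 (by decide), add_zero, add_zero]; rfl
    · rw [h0 0 (by decide), h0 2 (by decide), zero_add, add_zero]; rfl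
    · rw [h0 0 (by decide), h0 1 (by decide), zero_add, zero_add]; rfl
  -- main off-diagonal equation
  have E : ∀ i j, i ≠ j → A i (c i) * Q (c i) j = Xmat t i j := by
    intro i j hij
    have h0 := HAQ i j
    have hz : ∀ k, k ≠ c i → A i k * Q k j = 0 := fun k hk => by
      rw [hA0 i k hk, zero_mul]
    obtain ⟨ci, hci⟩ : ∃ x, c i = x := ⟨_, rfl⟩
    rw [hci] at hz ⊢
    fin_cases ci
    · rw [hz 1 (by decide), hz 2 (by decide), add_zero, add_zero] at h0; exact h0
    · rw [hz 0 (by decide), hz 2 (by decide), zero_add, add_zero] at h0; exact h0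
    · rw [hz 0 (by decide), hz 1 (by decide), zero_add, zero_add] at h0; exact h0
  -- A i (c i) is nonzero
  have hA1 : ∀ i, A i (c i) ≠ 0 := by
    intro i h0
    obtain ⟨j, hj⟩ := exists_ne i
    have he := E i j (Ne.symm hj)
    rw [h0, zero_mul] at he
    exact Xne t (Ne.symm hj) he.symm
  -- extract integers
  have hαe : ∀ i, ∃ m : ℤ, A i (c i) = tz m := fun i => zmax_ne_zero (hA1 i)
  choose α hα using hαe
  have hβe : ∀ j, ∃ m : ℤ, B (c j) j = tz m := fun j => zmax_ne_zero (hBne j)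
  choose β hβ using hβe
  have key2 : ∀ i j, i ≠ j →
      α i + ((if c i = 0 ∧ c j = 2 then s else 0) + β j)
        = (if i = 0 ∧ j = 2 then t else 0) := by
    intro i j hij
    have e := E i j hij
    rw [E2 (c i) j, hα i, hβ j, Xoff s (hcinj i j hij), Xoff t hij,
      tz_mul, tz_mul] at e
    exact tz_inj e
  exact arith s t c (hcinj 0 1 (by decide)) (hcinj 0 2 (by decide))
    (hcinj 1 2 (by decide)) α β key2

/-- If `X_s` and `X_t` are J-related in `M_3(ℤ_max)` then `t = s` or `t + s = 0`
(tropically `ts = 1`); consequently, the `X_s` for `s ∈ ℕ` lie in pairwise distinct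
J-classes. -/
theorem stmt15 :
    (∀ s t : ℤ,
      ((∃ A B : Matrix (Fin 3) (Fin 3) Zmax, A * Xmat s * B = Xmat t) ∧
       (∃ C D : Matrix (Fin 3) (Fin 3) Zmax, C * Xmat t * D = Xmat s)) →
      t = s ∨ t + s = 0) ∧
    (∀ s t : ℕ,
      ((∃ A B : Matrix (Fin 3) (Fin 3) Zmax, A * Xmat (s : ℤ) * B = Xmat (t : ℤ)) ∧
       (∃ C D : Matrix (Fin 3) (Fin 3) Zmax, C * Xmat (t : ℤ) * D = Xmat (s : ℤ))) →
      s = t) := by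
  constructor
  · rintro s t ⟨⟨A, B, hAB⟩, -⟩
    exact key s t A B hAB
  · rintro s t ⟨⟨A, B, hAB⟩, -⟩
    have := key (s : ℤ) (t : ℤ) A B hAB
    omega
end

section
/- Let S be an infinite commutative anti-negative semiring with no zero divisors. Then the monoid M_3(S) is not finitely generated. -/
namespace Stmt16Aux

abbrev R3 := Fin 3 → Bool

def meets (r w : R3) : Bool := (r 0 && w 0) || (r 1 && w 1) || (r 2 && w 2)

def eB (k : Fin 3) : R3 := fun j => j == k

def isSing (r : R3) : Prop := ∃ k, r = eB k

instance : DecidablePred isSing := fun r => by unfold isSing; infer_instance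

def zeroR : R3 := fun _ => false

-- tiny decide lemmas
lemma meets_eB_left (k : Fin 3) (w : R3) : meets (eB k) w = w k := by revert k w; decide

lemma meets_eB_right (r : R3) (k : Fin 3) : meets r (eB k) = r k := by revert r k; decide

lemma meets_true_ne_zero {r w : R3} (h : meets r w = true) : r ≠ zeroR ∧ w ≠ zeroR := by
  revert r w; decide

lemma meets_false_of (r w : R3) (y : Fin 3) (h : meets r w = false) (hr : r y = true) :
    w y = false := by revert r w y; decide

lemma sing_of_meets_false {r w : R3} (hr : ¬ isSing r) (hr0 : r ≠ zeroR)
    (h : meets r w = false) (hw0 : w ≠ zeroR) : isSing w := by revert r w; decide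

lemma compl_of (w : R3) (y : Fin 3) (hw : ¬ isSing w) (hw0 : w ≠ zeroR) (hwy : w y = false) :
    w = fun k => !(k == y) := by revert w y; decide

lemma eB_of_meets_compl (r : R3) (y : Fin 3) (h : meets r (fun k => !(k == y)) = false)
    (hr0 : r ≠ zeroR) : r = eB y := by revert r y; decide

lemma exists_third (i j : Fin 3) (h : i ≠ j) : ∃ k, k ≠ i ∧ k ≠ j := by revert i j; decide

lemma exists_ne' (i : Fin 3) : ∃ j, i ≠ j := by revert i; decide

theorem bool_lemma1 (u v : Fin 3 → R3)
    (h0 : ∀ i, meets (u i) (v i) = false)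
    (h1 : ∀ i j, i ≠ j → meets (u i) (v j) = true) :
    (∃ σ : Equiv.Perm (Fin 3), ∀ i, u i = eB (σ i)) ∨
    (∃ σ : Equiv.Perm (Fin 3), ∀ i, v i = eB (σ i)) := by
  have hunz : ∀ i, u i ≠ zeroR := by
    intro i
    obtain ⟨j, hj⟩ := exists_ne' i
    exact (meets_true_ne_zero (h1 i j hj)).1
  have hvnz : ∀ i, v i ≠ zeroR := by
    intro i
    obtain ⟨j, hj⟩ := exists_ne' i
    exact (meets_true_ne_zero (h1 j i (fun h => hj h.symm))).2
  by_cases hA : ∀ i, isSing (u i)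
  · left
    choose x hx using hA
    have hinj : Function.Injective x := by
      intro i j hij
      by_contra hne
      have h2 : v j (x i) = true := by
        have := h1 i j hne; rwa [hx i, meets_eB_left] at this
      have h3 : v j (x j) = false := by
        have := h0 j; rwa [hx j, meets_eB_left] at this
      rw [hij] at h2; simp [h2] at h3
    exact ⟨Equiv.ofBijective x ((Finite.injective_iff_bijective).mp hinj), hx⟩
  · right
    push_neg at hA
    obtain ⟨i₀, hi₀⟩ := hA
    -- v i₀ is a singleton
    have hvi₀ : isSing (v i₀) := sing_of_meets_false hi₀ (hunz i₀) (h0 i₀) (hvnz i₀)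
    obtain ⟨y, hy⟩ := hvi₀
    -- every v j is a singleton
    have hsing : ∀ j, isSing (v j) := by
      intro j
      by_cases hj : j = i₀
      · exact hj ▸ ⟨y, hy⟩
      by_contra hvj
      have hujy : u j y = true := by
        have := h1 j i₀ hj; rwa [hy, meets_eB_right] at this
      have hvjy : v j y = false := meets_false_of _ _ y (h0 j) hujy
      have hvjc : v j = fun k => !(k == y) := compl_of _ y hvj (hvnz j) hvjy
      have huj : u j = eB y := by
        apply eB_of_meets_compl _ y _ (hunz j)
        rw [← hvjc]; exact h0 j
      obtain ⟨k, hki, hkj⟩ := exists_third i₀ j (fun h => hj h.symm)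
      have h4 : v k y = true := by
        have := h1 j k (fun h => hkj h.symm); rwa [huj, meets_eB_left] at this
      have h5 : u k y = true := by
        have := h1 k i₀ hki; rwa [hy, meets_eB_right] at this
      have h6 : v k y = false := meets_false_of _ _ y (h0 k) h5
      simp [h4] at h6
    choose x hx using hsing
    have hinj : Function.Injective x := by
      intro j k hjk
      by_contra hne
      have h2 : u j (x k) = true := by
        have := h1 j k hne; rwa [hx k, meets_eB_right] at this
      have h3 : u j (x j) = false := by
        have := h0 j; rwa [hx j, meets_eB_right] at this
      rw [hjk] at h3; simp [h2] at h3
    exact ⟨Equiv.ofBijective x ((Finite.injective_iff_bijective).mp hinj), hx⟩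

abbrev BM := Fin 3 → Fin 3 → Bool

def bmul (A B : BM) : BM := fun i j => meets (A i) (fun k => B k j)

def bP : BM := fun i j => !(i == j)

def isPermRow (A : BM) : Prop := ∃ σ : Equiv.Perm (Fin 3), ∀ i, A i = eB (σ i)

def isPermCol (A : BM) : Prop := ∃ σ : Equiv.Perm (Fin 3), ∀ j, (fun k => A k j) = eB (σ j)

theorem bool_fact1 (A B : BM) (h : bmul A B = bP) : isPermRow A ∨ isPermCol B := by
  have h0 : ∀ i, meets (A i) (fun k => B k i) = false := by
    intro i; have := congrFun (congrFun h i) i; simpa [bmul, bP] using this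
  have h1 : ∀ i j, i ≠ j → meets (A i) (fun k => B k j) = true := by
    intro i j hij; have := congrFun (congrFun h i) j
    simp only [bmul, bP] at this
    rw [this]; simp [Fin.ext_iff] at hij ⊢; omega
  exact bool_lemma1 A (fun j k => B k j) h0 h1

-- a row times bP is never a singleton
lemma rowP_not_sing (r : R3) : ¬ isSing (fun j => meets r (fun k => bP k j)) := by
  revert r; decide

lemma rowP_sing (r : R3) (hf : ∃ j, meets r (fun k => bP k j) = false)
    (ht : ∃ j, meets r (fun k => bP k j) = true) : isSing r := by
  revert r; decide

lemma bP_row_inj (i i' : Fin 3) (h : ∀ j, bP i j = bP i' j) : i = i' := by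
  revert i i'; decide

theorem bool_fact2 (A B : BM) (h : bmul (bmul A bP) B = bP) : isPermRow A ∧ isPermCol B := by
  have hcb : isPermCol B := by
    rcases bool_fact1 (bmul A bP) B h with hrow | hcol
    · obtain ⟨σ, hσ⟩ := hrow
      exact absurd ⟨σ 0, hσ 0⟩ (rowP_not_sing (A 0))
    · exact hcol
  obtain ⟨σ, hσ⟩ := hcb
  -- key : ∀ i j, meets (A i) (fun k => bP k (σ j)) = bP i j
  have key : ∀ i j, meets (A i) (fun k => bP k (σ j)) = bP i j := by
    intro i j
    have h2 := congrFun (congrFun h i) j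
    have h3 : (fun k => B k j) = eB (σ j) := hσ j
    calc meets (A i) (fun k => bP k (σ j)) = (bmul A bP) i (σ j) := rfl
    _ = meets ((bmul A bP) i) (eB (σ j)) := (meets_eB_right _ _).symm
    _ = meets ((bmul A bP) i) (fun k => B k j) := by rw [h3]
    _ = bP i j := h2
  constructor
  · have hsing : ∀ i, isSing (A i) := by
      intro i
      apply rowP_sing
      · exact ⟨σ i, by rw [key i i]; simp [bP]⟩
      · obtain ⟨j, hj⟩ := exists_ne' i
        exact ⟨σ j, by rw [key i j]; simp [bP, hj]⟩
    choose x hx using hsing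
    have hinj : Function.Injective x := by
      intro i i' hii
      apply bP_row_inj
      intro j
      rw [← key i j, ← key i' j, hx i, hx i', hii]
    exact ⟨Equiv.ofBijective x ((Finite.injective_iff_bijective).mp hinj), hx⟩
  · exact ⟨σ, hσ⟩

section Slevel

variable {S : Type*} [CommSemiring S]

abbrev MS (S : Type*) := Matrix (Fin 3) (Fin 3) S

def XM (s : S) : MS S := Matrix.of fun i j => if i = j then 0 else if i = 0 ∧ j = 2 then s else 1

lemma XM_apply (s : S) (i j : Fin 3) :
    XM s i j = if i = j then 0 else if i = 0 ∧ j = 2 then s else 1 := rfl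

lemma XM_eq_zero_iff [Nontrivial S] {s : S} (hs : s ≠ 0) (i j : Fin 3) :
    XM s i j = 0 ↔ i = j := by
  rw [XM_apply]
  split_ifs with h1 h2
  · simp [h1]
  · simpa [h1] using hs
  · simp [h1]

lemma meets_iff (r w : R3) : meets r w = true ↔ ∃ k : Fin 3, r k = true ∧ w k = true := by
  revert r w; decide

lemma sum3_eq_zero (hanti : ∀ x y : S, x + y = 0 → x = 0 ∧ y = 0) {a b c : S}
    (h : a + b + c = 0) : a = 0 ∧ b = 0 ∧ c = 0 := by
  obtain ⟨h1, h2⟩ := hanti _ _ h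
  obtain ⟨h3, h4⟩ := hanti _ _ h1
  exact ⟨h3, h4, h2⟩

lemma mul_apply_eq_zero_iff (hanti : ∀ x y : S, x + y = 0 → x = 0 ∧ y = 0)
    (hzd : ∀ x y : S, x * y = 0 → x = 0 ∨ y = 0)
    (A B : MS S) (i j : Fin 3) :
    (A * B) i j = 0 ↔ ∀ k, A i k = 0 ∨ B k j = 0 := by
  have hm : (A * B) i j = A i 0 * B 0 j + A i 1 * B 1 j + A i 2 * B 2 j := by
    rw [Matrix.mul_apply, Fin.sum_univ_three]
  rw [hm]
  constructor
  · intro h k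
    obtain ⟨h0, h1, h2⟩ := sum3_eq_zero hanti h
    fin_cases k
    · exact hzd _ _ h0
    · exact hzd _ _ h1
    · exact hzd _ _ h2
  · intro h
    have e : ∀ k, A i k * B k j = 0 := by
      intro k; rcases h k with h' | h' <;> simp [h']
    rw [e 0, e 1, e 2]; simp

lemma mul_apply_ne_zero_iff (hanti : ∀ x y : S, x + y = 0 → x = 0 ∧ y = 0)
    (hzd : ∀ x y : S, x * y = 0 → x = 0 ∨ y = 0)
    (A B : MS S) (i j : Fin 3) :
    (A * B) i j ≠ 0 ↔ ∃ k, A i k ≠ 0 ∧ B k j ≠ 0 := by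
  rw [Ne, mul_apply_eq_zero_iff hanti hzd]
  push_neg
  rfl

lemma XM_not_unit [Nontrivial S] (hanti : ∀ x y : S, x + y = 0 → x = 0 ∧ y = 0) (s : S) :
    ¬ IsUnit (XM s) := by
  rintro ⟨u, hu⟩
  set Y : MS S := Units.val (u⁻¹) with hY
  have hXY : XM s * Y = 1 := by rw [← hu, hY, Units.mul_inv]
  have happ : ∀ i j, XM s i 0 * Y 0 j + XM s i 1 * Y 1 j + XM s i 2 * Y 2 j = (1 : MS S) i j := by
    intro i j; rw [← Fin.sum_univ_three fun k => XM s i k * Y k j, ← Matrix.mul_apply, hXY]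
  have h10 := happ 1 0
  have h20 := happ 2 0
  have h00 := happ 0 0
  simp [XM_apply, Matrix.one_apply] at h10 h20 h00
  -- h10 : Y 0 0 + Y 2 0 = 0   (1*Y00 + 0*Y10 + 1*Y20)
  obtain ⟨hY00, hY20⟩ := hanti _ _ h10
  -- h20 : Y 0 0 + Y 1 0 = 0
  obtain ⟨-, hY10⟩ := hanti _ _ h20
  -- h00 : Y 1 0 + s * Y 2 0 = 1
  rw [hY10, hY20, mul_zero, add_zero] at h00
  exact zero_ne_one h00

end Slevel

section Slevel2

open Matrix

variable {S : Type*} [CommSemiring S]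

lemma dot_single_left (a b : Fin 3 → S) (k0 : Fin 3) (h : ∀ k, k ≠ k0 → a k = 0) :
    ∑ k, a k * b k = a k0 * b k0 :=
  Finset.sum_eq_single_of_mem k0 (Finset.mem_univ _) (fun k _ hk => by rw [h k hk, zero_mul])

lemma dot_single_right (a b : Fin 3 → S) (k0 : Fin 3) (h : ∀ k, k ≠ k0 → b k = 0) :
    ∑ k, a k * b k = a k0 * b k0 :=
  Finset.sum_eq_single_of_mem k0 (Finset.mem_univ _) (fun k _ hk => by rw [h k hk, mul_zero])

lemma isUnit_of_rows (A : MS S) (σ : Equiv.Perm (Fin 3)) (ha : ∀ i, IsUnit (A i (σ i)))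
    (hz : ∀ i j, j ≠ σ i → A i j = 0) : IsUnit A := by
  set b : Fin 3 → S := fun i => Units.val ((ha i).unit⁻¹) with hb
  have hab : ∀ i, A i (σ i) * b i = 1 := by
    intro i
    have := (ha i).unit.mul_inv
    rwa [IsUnit.unit_spec] at this
  set C : MS S := Matrix.of (fun k j => if k = σ j then b j else 0) with hC
  have hAC : A * C = 1 := by
    ext i j
    rw [Matrix.mul_apply, dot_single_left (fun k => A i k) (fun k => C k j) (σ i)
      (fun k hk => hz i k hk)]
    by_cases hij : i = j
    · subst hij
      simp [hC, hab i, Matrix.one_apply]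
    · have : σ i ≠ σ j := fun h => hij (σ.injective h)
      simp [hC, this, Matrix.one_apply, hij]
  have hCA : C * A = 1 := by
    ext i j
    have hsupp : ∀ k, k ≠ σ.symm i → C i k = 0 := by
      intro k hk
      have : i ≠ σ k := by
        intro h; exact hk (by rw [h, Equiv.symm_apply_apply])
      simp [hC, this]
    rw [Matrix.mul_apply, dot_single_left (fun k => C i k) (fun k => A k j) (σ.symm i) hsupp]
    by_cases hij : i = j
    · subst hij
      have h1 : C i (σ.symm i) = b (σ.symm i) := by simp [hC]
      have h2 : A (σ.symm i) i = A (σ.symm i) (σ (σ.symm i)) := by rw [Equiv.apply_symm_apply]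
      rw [h1, h2, mul_comm, hab, Matrix.one_apply_eq]
    · have : A (σ.symm i) j = 0 := by
        apply hz
        intro h; rw [h, Equiv.apply_symm_apply] at hij; exact hij rfl
      simp [this, Matrix.one_apply, hij]
  exact ⟨⟨A, C, hAC, hCA⟩, rfl⟩

lemma isUnit_of_cols (A : MS S) (ρ : Equiv.Perm (Fin 3)) (ha : ∀ j, IsUnit (A (ρ j) j))
    (hz : ∀ i j, i ≠ ρ j → A i j = 0) : IsUnit A := by
  have hT : IsUnit Aᵀ := by
    apply isUnit_of_rows Aᵀ ρ
    · intro i; exact ha i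
    · intro i j hj; exact hz j i hj
  obtain ⟨⟨u, c, huc, hcu⟩, hu⟩ := hT
  have h1 : Aᵀ * c = 1 := by rw [← hu]; exact huc
  have h2 : c * Aᵀ = 1 := by rw [← hu]; exact hcu
  have h3 : cᵀ * A = 1 := by
    have := congrArg Matrix.transpose h1
    rwa [Matrix.transpose_mul, Matrix.transpose_transpose, Matrix.transpose_one] at this
  have h4 : A * cᵀ = 1 := by
    have := congrArg Matrix.transpose h2
    rwa [Matrix.transpose_mul, Matrix.transpose_transpose, Matrix.transpose_one] at this
  exact ⟨⟨A, cᵀ, h4, h3⟩, rfl⟩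

lemma div_lemma [Nontrivial S]
    (hanti : ∀ x y : S, x + y = 0 → x = 0 ∧ y = 0)
    (hzd : ∀ x y : S, x * y = 0 → x = 0 ∨ y = 0)
    {s : S} (hs : s ≠ 0) (A B : MS S) (h : XM s = A * B) : IsUnit A ∨ IsUnit B := by
  classical
  set u : Fin 3 → R3 := fun i k => decide (A i k ≠ 0) with hu
  set v : Fin 3 → R3 := fun j k => decide (B k j ≠ 0) with hv
  have habiff : ∀ i j, (A * B) i j ≠ 0 ↔ ∃ k, A i k ≠ 0 ∧ B k j ≠ 0 :=
    mul_apply_ne_zero_iff hanti hzd A B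
  have hmeets : ∀ i j, meets (u i) (v j) = true ↔ (A * B) i j ≠ 0 := by
    intro i j
    rw [meets_iff, habiff]
    constructor
    · rintro ⟨k, hk1, hk2⟩
      exact ⟨k, by simpa [hu] using hk1, by simpa [hv] using hk2⟩
    · rintro ⟨k, hk1, hk2⟩
      exact ⟨k, by simpa [hu] using hk1, by simpa [hv] using hk2⟩
  have h0 : ∀ i, meets (u i) (v i) = false := by
    intro i
    rw [← Bool.not_eq_true, hmeets]
    simp only [ne_eq, not_not, ← h]
    exact (XM_eq_zero_iff hs i i).mpr rfl
  have h1 : ∀ i j, i ≠ j → meets (u i) (v j) = true := by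
    intro i j hij
    rw [hmeets, ← h]
    intro hzero
    exact hij ((XM_eq_zero_iff hs i j).mp hzero)
  rcases bool_lemma1 u v h0 h1 with ⟨σ, hσ⟩ | ⟨σ, hσ⟩
  · left
    have hiff : ∀ i k, A i k ≠ 0 ↔ k = σ i := by
      intro i k
      have := congrFun (hσ i) k
      simp only [hu, eB, beq_iff_eq] at this
      constructor
      · intro hne; have : decide (A i k ≠ 0) = decide (k = σ i) := this
        rw [decide_eq_true hne] at this; exact of_decide_eq_true this.symm
      · intro hk; intro hzero
        have : decide (A i k ≠ 0) = decide (k = σ i) := this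
        rw [decide_eq_true hk] at this
        exact (of_decide_eq_true this) hzero
    have hz : ∀ i j, j ≠ σ i → A i j = 0 := by
      intro i j hj
      by_contra hne
      exact hj ((hiff i j).mp hne)
    apply isUnit_of_rows A σ _ hz
    intro i
    set j0 : Fin 3 := if i = 0 then 1 else 0 with hj0
    have hXij : XM s i j0 = 1 := by
      fin_cases i <;> simp [hj0, XM_apply]
    have hred : XM s i j0 = A i (σ i) * B (σ i) j0 := by
      rw [h, Matrix.mul_apply]
      exact dot_single_left (fun k => A i k) (fun k => B k j0) (σ i) (fun k hk => hz i k hk)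
    exact IsUnit.of_mul_eq_one _ (by rw [← hred, hXij])
  · right
    have hiff : ∀ k j, B k j ≠ 0 ↔ k = σ j := by
      intro k j
      have := congrFun (hσ j) k
      simp only [hv, eB, beq_iff_eq] at this
      constructor
      · intro hne
        have : decide (B k j ≠ 0) = decide (k = σ j) := this
        rw [decide_eq_true hne] at this; exact of_decide_eq_true this.symm
      · intro hk; intro hzero
        have : decide (B k j ≠ 0) = decide (k = σ j) := this
        rw [decide_eq_true hk] at this
        exact (of_decide_eq_true this) hzero
    have hz : ∀ k j, k ≠ σ j → B k j = 0 := by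
      intro k j hk
      by_contra hne
      exact hk ((hiff k j).mp hne)
    apply isUnit_of_cols B σ _ (fun i j h' => hz i j h')
    intro j
    set i0 : Fin 3 := if j = 0 then 1 else if j = 1 then 0 else 1 with hi0
    have hXij : XM s i0 j = 1 := by
      fin_cases j <;> simp [hi0, XM_apply]
    have hred : XM s i0 j = A i0 (σ j) * B (σ j) j := by
      rw [h, Matrix.mul_apply]
      exact dot_single_right (fun k => A i0 k) (fun k => B k j) (σ j) (fun k hk => hz k j hk)
    rw [hXij] at hred
    exact IsUnit.of_mul_eq_one _ (mul_comm (A i0 (σ j)) (B (σ j) j) ▸ hred.symm)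

end Slevel2

section Slevel3

variable {S : Type*} [CommSemiring S]

lemma bool_eq_of_iff {a b : Bool} (h : a = true ↔ b = true) : a = b := by
  revert a b; decide

-- six algebra case lemmas
lemma case1 {u0 u1 u2 v0 v1 v2 s t : S} (e01 : u0 * v1 = 1) (e10 : u1 * v0 = 1)
    (e12 : u1 * v2 = 1) (e20 : u2 * v0 = 1) (e21 : u2 * v1 = 1)
    (et : t = u0 * s * v2) : t = s := by
  have h1 : u0 * v2 = 1 := by
    calc u0 * v2 = u0 * v2 * ((u1 * v0) * (u2 * v1)) := by rw [e10, e21, mul_one, mul_one]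
    _ = (u0 * v1) * ((u1 * v2) * (u2 * v0)) := by ring
    _ = 1 := by rw [e01, e12, e20, mul_one, mul_one]
  calc t = u0 * s * v2 := et
  _ = s * (u0 * v2) := by ring
  _ = s := by rw [h1, mul_one]

lemma case2 {u0 u1 u2 v0 v1 v2 s t : S} (e01 : u0 * s * v1 = 1) (e10 : u1 * v0 = 1)
    (e12 : u1 * v2 = 1) (e20 : u2 * v0 = 1) (e21 : u2 * v1 = 1)
    (et : t = u0 * v2) : t * s = 1 := by
  calc t * s = u0 * v2 * s := by rw [et]
  _ = u0 * v2 * s * ((u1 * v0) * (u2 * v1)) := by rw [e10, e21, mul_one, mul_one]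
  _ = (u0 * s * v1) * ((u1 * v2) * (u2 * v0)) := by ring
  _ = 1 := by rw [e01, e12, e20, mul_one, mul_one]

lemma case3 {u0 u1 u2 v0 v1 v2 s t : S} (e01 : u0 * v1 = 1) (e10 : u1 * v0 = 1)
    (e12 : u1 * s * v2 = 1) (e20 : u2 * v0 = 1) (e21 : u2 * v1 = 1)
    (et : t = u0 * v2) : t * s = 1 := by
  calc t * s = u0 * v2 * s := by rw [et]
  _ = u0 * v2 * s * ((u1 * v0) * (u2 * v1)) := by rw [e10, e21, mul_one, mul_one]
  _ = (u1 * s * v2) * ((u0 * v1) * (u2 * v0)) := by ring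
  _ = 1 := by rw [e01, e12, e20, mul_one, mul_one]

lemma case4 {u0 u1 u2 v0 v1 v2 s t : S} (e01 : u0 * v1 = 1) (e10 : u1 * v0 = 1)
    (e12 : u1 * v2 = 1) (e20 : u2 * v0 = 1) (e21 : u2 * s * v1 = 1)
    (et : t = u0 * v2) : t = s := by
  calc t = u0 * v2 := et
  _ = u0 * v2 * ((u1 * v0) * (u2 * s * v1)) := by rw [e10, e21, mul_one, mul_one]
  _ = s * ((u0 * v1) * ((u1 * v2) * (u2 * v0))) := by ring
  _ = s := by rw [e01, e12, e20, mul_one, mul_one, mul_one]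

lemma case5 {u0 u1 u2 v0 v1 v2 s t : S} (e01 : u0 * v1 = 1) (e10 : u1 * s * v0 = 1)
    (e12 : u1 * v2 = 1) (e20 : u2 * v0 = 1) (e21 : u2 * v1 = 1)
    (et : t = u0 * v2) : t = s := by
  calc t = u0 * v2 := et
  _ = u0 * v2 * ((u2 * v1) * (u1 * s * v0)) := by rw [e21, e10, mul_one, mul_one]
  _ = s * ((u0 * v1) * ((u1 * v2) * (u2 * v0))) := by ring
  _ = s := by rw [e01, e12, e20, mul_one, mul_one, mul_one]

lemma case6 {u0 u1 u2 v0 v1 v2 s t : S} (e01 : u0 * v1 = 1) (e10 : u1 * v0 = 1)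
    (e12 : u1 * v2 = 1) (e20 : u2 * s * v0 = 1) (e21 : u2 * v1 = 1)
    (et : t = u0 * v2) : t * s = 1 := by
  calc t * s = u0 * v2 * s := by rw [et]
  _ = u0 * v2 * s * ((u1 * v0) * (u2 * v1)) := by rw [e10, e21, mul_one, mul_one]
  _ = (u2 * s * v0) * ((u0 * v1) * (u1 * v2)) := by ring
  _ = 1 := by rw [e01, e12, e20, mul_one, mul_one]

lemma L1 [Nontrivial S]
    (hanti : ∀ x y : S, x + y = 0 → x = 0 ∧ y = 0)
    (hzd : ∀ x y : S, x * y = 0 → x = 0 ∨ y = 0)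
    {s t : S} (hs : s ≠ 0) (ht : t ≠ 0)
    (U V : MS S) (h : XM t = U * XM s * V) : t = s ∨ t * s = 1 := by
  classical
  set bU : BM := fun i k => decide (U i k ≠ 0) with hbU
  set bV : BM := fun k j => decide (V k j ≠ 0) with hbV
  set bW : BM := fun i j => decide ((U * XM s) i j ≠ 0) with hbW
  have hbUiff : ∀ i j, bU i j = true ↔ U i j ≠ 0 := by intro i j; simp [hbU]
  have hbViff : ∀ i j, bV i j = true ↔ V i j ≠ 0 := by intro i j; simp [hbV]
  have hbPiff : ∀ i j, bP i j = true ↔ XM s i j ≠ 0 := by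
    intro i j
    have hx : XM s i j = 0 ↔ i = j := XM_eq_zero_iff hs i j
    simp [bP, hx]
  have hmul1 : ∀ i j, (bmul bU bP) i j = true ↔ (U * XM s) i j ≠ 0 := by
    intro i j
    rw [show bmul bU bP i j = meets (bU i) (fun k => bP k j) from rfl, meets_iff,
      mul_apply_ne_zero_iff hanti hzd]
    constructor
    · rintro ⟨k, h1, h2⟩; exact ⟨k, (hbUiff i k).mp h1, (hbPiff k j).mp h2⟩
    · rintro ⟨k, h1, h2⟩; exact ⟨k, (hbUiff i k).mpr h1, (hbPiff k j).mpr h2⟩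
  have hmul2 : ∀ i j, (bmul (bmul bU bP) bV) i j = true ↔ ((U * XM s) * V) i j ≠ 0 := by
    intro i j
    rw [show bmul (bmul bU bP) bV i j = meets ((bmul bU bP) i) (fun k => bV k j) from rfl,
      meets_iff, mul_apply_ne_zero_iff hanti hzd]
    constructor
    · rintro ⟨k, h1, h2⟩; exact ⟨k, (hmul1 i k).mp h1, (hbViff k j).mp h2⟩
    · rintro ⟨k, h1, h2⟩; exact ⟨k, (hmul1 i k).mpr h1, (hbViff k j).mpr h2⟩
  have hPP : bmul (bmul bU bP) bV = bP := by
    funext i j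
    apply bool_eq_of_iff
    rw [hmul2 i j, ← h]
    have hx : XM t i j = 0 ↔ i = j := XM_eq_zero_iff ht i j
    simp [bP, hx]
  obtain ⟨⟨σ, hσ⟩, ⟨ρ, hρ⟩⟩ := bool_fact2 bU bV hPP
  have hUiff : ∀ i k, U i k ≠ 0 ↔ k = σ i := by
    intro i k
    have h1 : bU i k = decide (k = σ i) := by
      have := congrFun (hσ i) k
      simpa [eB, Bool.beq_eq_decide_eq] using this
    rw [← hbUiff i k, h1]
    simp
  have hViff : ∀ k j, V k j ≠ 0 ↔ k = ρ j := by
    intro k j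
    have h1 : bV k j = decide (k = ρ j) := by
      have := congrFun (hρ j) k
      simpa [eB, Bool.beq_eq_decide_eq] using this
    rw [← hbViff k j, h1]
    simp
  have hUz : ∀ i k, k ≠ σ i → U i k = 0 := by
    intro i k hk; by_contra hne; exact hk ((hUiff i k).mp hne)
  have hVz : ∀ k j, k ≠ ρ j → V k j = 0 := by
    intro k j hk; by_contra hne; exact hk ((hViff k j).mp hne)
  have key : ∀ i j, XM t i j = U i (σ i) * XM s (σ i) (ρ j) * V (ρ j) j := by
    intro i j
    rw [h, Matrix.mul_apply,
      dot_single_right (fun l => (U * XM s) i l) (fun l => V l j) (ρ j)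
        (fun l hl => hVz l j hl),
      Matrix.mul_apply,
      dot_single_left (fun k => U i k) (fun k => XM s k (ρ j)) (σ i)
        (fun k hk => hUz i k hk)]
  have hune : ∀ i, U i (σ i) ≠ 0 := fun i => (hUiff i (σ i)).mpr rfl
  have hvne : ∀ j, V (ρ j) j ≠ 0 := fun j => (hViff (ρ j) j).mpr rfl
  have hρσ : ∀ i, ρ i = σ i := by
    intro i
    have hk := key i i
    rw [(XM_eq_zero_iff ht i i).mpr rfl] at hk
    rcases hzd _ _ hk.symm with h1 | h1
    · rcases hzd _ _ h1 with h2 | h2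
      · exact absurd h2 (hune i)
      · exact ((XM_eq_zero_iff hs _ _).mp h2).symm
    · exact absurd h1 (hvne i)
  have key' : ∀ i j, XM t i j = U i (σ i) * XM s (σ i) (σ j) * V (σ j) j := by
    intro i j
    have := key i j
    rwa [hρσ j] at this
  have d01 : σ 0 ≠ σ 1 := σ.injective.ne (by decide)
  have d02 : σ 0 ≠ σ 2 := σ.injective.ne (by decide)
  have d12 : σ 1 ≠ σ 2 := σ.injective.ne (by decide)
  have h3 : ∀ x : Fin 3, x = 0 ∨ x = 1 ∨ x = 2 := by decide
  have e01 := key' 0 1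
  have e10 := key' 1 0
  have e12 := key' 1 2
  have e20 := key' 2 0
  have e21 := key' 2 1
  have et := key' 0 2
  clear key key' hρσ hPP hmul1 hmul2 hσ hρ hUiff hViff hUz hVz hbUiff hbViff hbPiff
  rcases h3 (σ 0) with ha | ha | ha <;> rcases h3 (σ 1) with hb | hb | hb <;>
    rcases h3 (σ 2) with hc | hc | hc <;>
    rw [ha] at e01 e10 e20 et <;> rw [hb] at e01 e10 e12 e21 <;>
    rw [hc] at e12 e20 e21 et <;>
    first
    | exact absurd (ha.trans hb.symm) d01
    | exact absurd (ha.trans hc.symm) d02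
    | exact absurd (hb.trans hc.symm) d12
    | skip
  -- six goals remain, in lex order of (σ0,σ1,σ2):
  -- (0,1,2), (0,2,1), (1,0,2), (1,2,0), (2,0,1), (2,1,0)
  · left
    simp only [XM_apply] at e01 e10 e12 e20 e21 et
    norm_num at e01 e10 e12 e20 e21 et
    exact case1 e01.symm e10.symm e12.symm e20.symm e21.symm et
  · right
    simp only [XM_apply] at e01 e10 e12 e20 e21 et
    norm_num at e01 e10 e12 e20 e21 et
    exact case2 e01.symm e10.symm e12.symm e20.symm e21.symm et
  · right
    simp only [XM_apply] at e01 e10 e12 e20 e21 et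
    norm_num at e01 e10 e12 e20 e21 et
    exact case3 e01.symm e10.symm e12.symm e20.symm e21.symm et
  · left
    simp only [XM_apply] at e01 e10 e12 e20 e21 et
    norm_num at e01 e10 e12 e20 e21 et
    exact case4 e01.symm e10.symm e12.symm e20.symm e21.symm et
  · left
    simp only [XM_apply] at e01 e10 e12 e20 e21 et
    norm_num at e01 e10 e12 e20 e21 et
    exact case5 e01.symm e10.symm e12.symm e20.symm e21.symm et
  · right
    simp only [XM_apply] at e01 e10 e12 e20 e21 et
    norm_num at e01 e10 e12 e20 e21 et
    exact case6 e01.symm e10.symm e12.symm e20.symm e21.symm et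

end Slevel3

section Slevel4

variable {S : Type*} [CommSemiring S]

lemma sandwich_cancel (W W' : (MS S)ˣ) (A : MS S) :
    Units.val W⁻¹ * (Units.val W * A * Units.val W') * Units.val W'⁻¹ = A := by
  rw [mul_assoc (Units.val W) A, Units.inv_mul_cancel_left, Units.mul_inv_cancel_right]

lemma key_ind [Nontrivial S]
    (hanti : ∀ x y : S, x + y = 0 → x = 0 ∧ y = 0)
    (hzd : ∀ x y : S, x * y = 0 → x = 0 ∨ y = 0)
    {s : S} (hs : s ≠ 0) :
    ∀ (l : List (MS S)) (W W' : (MS S)ˣ),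
      Units.val W * XM s * Units.val W' = l.prod →
      ∃ g ∈ l, ∃ M N : (MS S)ˣ, g = Units.val M * XM s * Units.val N := by
  intro l
  induction l with
  | nil =>
    intro W W' hprod
    exfalso
    apply XM_not_unit hanti s
    simp only [List.prod_nil] at hprod
    have : XM s = Units.val W⁻¹ * Units.val W'⁻¹ := by
      calc XM s = Units.val W⁻¹ * (Units.val W * XM s * Units.val W') * Units.val W'⁻¹ :=
            (sandwich_cancel W W' _).symm
      _ = Units.val W⁻¹ * 1 * Units.val W'⁻¹ := by rw [hprod]
      _ = Units.val W⁻¹ * Units.val W'⁻¹ := by rw [mul_one]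
    rw [this]
    exact (W⁻¹ * W'⁻¹).isUnit
  | cons a tl ih =>
    intro W W' hprod
    simp only [List.prod_cons] at hprod
    have hX : XM s = (Units.val W⁻¹ * a) * (tl.prod * Units.val W'⁻¹) := by
      calc XM s = Units.val W⁻¹ * (Units.val W * XM s * Units.val W') * Units.val W'⁻¹ :=
            (sandwich_cancel W W' _).symm
      _ = Units.val W⁻¹ * (a * tl.prod) * Units.val W'⁻¹ := by rw [hprod]
      _ = (Units.val W⁻¹ * a) * (tl.prod * Units.val W'⁻¹) := by
            rw [← mul_assoc, mul_assoc (Units.val W⁻¹ * a)]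
    rcases div_lemma hanti hzd hs _ _ hX with hA | hB
    · obtain ⟨u, hu⟩ := hA
      have hX' : XM s = Units.val u * (tl.prod * Units.val W'⁻¹) := by rw [hu]; exact hX
      have hrec : Units.val u⁻¹ * XM s * Units.val W' = tl.prod := by
        rw [hX', ← mul_assoc, Units.inv_mul, one_mul, Units.inv_mul_cancel_right]
      obtain ⟨g, hg, M, N, hrep⟩ := ih u⁻¹ W' hrec
      exact ⟨g, List.mem_cons_of_mem a hg, M, N, hrep⟩
    · obtain ⟨v, hv⟩ := hB
      have hX' : XM s = (Units.val W⁻¹ * a) * Units.val v := by rw [hv]; exact hX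
      refine ⟨a, List.mem_cons_self, W, v⁻¹, ?_⟩
      calc a = Units.val W * (Units.val W⁻¹ * a) := by rw [Units.mul_inv_cancel_left]
      _ = Units.val W * ((Units.val W⁻¹ * a) * Units.val v * Units.val v⁻¹) := by
            rw [Units.mul_inv_cancel_right]
      _ = Units.val W * (XM s * Units.val v⁻¹) := by rw [← hX']
      _ = Units.val W * XM s * Units.val v⁻¹ := by rw [mul_assoc]

end Slevel4

end Stmt16Aux

open Stmt16Aux in
/-- If `S` is an infinite commutative anti-negative semiring with no zero divisors,
then the monoid `M_3(S)` is not finitely generated. -/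
theorem stmt16 (S : Type*) [CommSemiring S] [Infinite S]
    (hanti : ∀ x y : S, x + y = 0 → x = 0 ∧ y = 0)
    (hzd : ∀ x y : S, x * y = 0 → x = 0 ∨ y = 0) :
    ¬ ∃ G : Finset (Matrix (Fin 3) (Fin 3) S),
        Submonoid.closure (G : Set (Matrix (Fin 3) (Fin 3) S)) = ⊤ := by
  classical
  rintro ⟨G, hG⟩
  have main : ∀ s : S, s ≠ 0 → ∃ g ∈ G, ∃ M N : (MS S)ˣ,
      g = Units.val M * XM s * Units.val N := by
    intro s hs
    have hmem : XM s ∈ Submonoid.closure (G : Set (MS S)) := by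
      rw [hG]; exact Submonoid.mem_top _
    obtain ⟨l, hl, hprod⟩ := Submonoid.exists_list_of_mem_closure hmem
    have hstart : Units.val (1 : (MS S)ˣ) * XM s * Units.val (1 : (MS S)ˣ) = l.prod := by
      simp [hprod]
    obtain ⟨g, hgl, M, N, hrep⟩ := key_ind hanti hzd hs l 1 1 hstart
    exact ⟨g, hl g hgl, M, N, hrep⟩
  set T : Set S := {x : S | x ≠ 0} with hT
  have hTinf : T.Infinite := by
    have h1 : (({0} : Set S)ᶜ).Infinite := (Set.finite_singleton (0:S)).infinite_compl
    have h2 : T = ({0} : Set S)ᶜ := by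
      ext x; simp [hT]
    rw [h2]; exact h1
  haveI := hTinf.to_subtype
  have main' : ∀ p : T, ∃ gh : {x // x ∈ G}, ∃ M N : (MS S)ˣ,
      (gh : MS S) = Units.val M * XM (p : S) * Units.val N := by
    rintro ⟨s, hs⟩
    obtain ⟨g, hgG, M, N, hrep⟩ := main s hs
    exact ⟨⟨g, hgG⟩, M, N, hrep⟩
  choose F hF using main'
  obtain ⟨g0, hg0⟩ := Finite.exists_infinite_fiber F
  haveI : Infinite ↥(F ⁻¹' {g0}) := hg0
  have rel : ∀ p q : ↥(F ⁻¹' {g0}), ((q.1 : S) = (p.1 : S)) ∨ (q.1 : S) * (p.1 : S) = 1 := by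
    intro p q
    obtain ⟨M, N, hrepp⟩ := hF p.1
    obtain ⟨M', N', hrepq⟩ := hF q.1
    have hp : F p.1 = g0 := p.2
    have hq : F q.1 = g0 := q.2
    rw [hp] at hrepp; rw [hq] at hrepq
    have heq : Units.val M * XM (p.1 : S) * Units.val N
        = Units.val M' * XM (q.1 : S) * Units.val N' := by rw [← hrepp, ← hrepq]
    have hXt : XM (q.1 : S) = (Units.val M'⁻¹ * Units.val M) * XM (p.1 : S)
        * (Units.val N * Units.val N'⁻¹) := by
      calc XM (q.1 : S)
          = Units.val M'⁻¹ * (Units.val M' * XM (q.1 : S) * Units.val N') * Units.val N'⁻¹ :=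
            (sandwich_cancel M' N' _).symm
      _ = Units.val M'⁻¹ * (Units.val M * XM (p.1:S) * Units.val N) * Units.val N'⁻¹ := by
            rw [heq]
      _ = (Units.val M'⁻¹ * Units.val M) * XM (p.1 : S) * (Units.val N * Units.val N'⁻¹) := by
            simp only [mul_assoc]
    exact L1 hanti hzd p.1.2 q.1.2 _ _ hXt
  -- get three distinct elements
  obtain ⟨x1⟩ := (inferInstance : Nonempty ↥(F ⁻¹' {g0}))
  obtain ⟨x2, hx2⟩ := Infinite.exists_notMem_finset ({x1} : Finset ↥(F ⁻¹' {g0}))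
  obtain ⟨x3, hx3⟩ := Infinite.exists_notMem_finset ({x1, x2} : Finset ↥(F ⁻¹' {g0}))
  have h21 : x2 ≠ x1 := by simpa using hx2
  have h31 : x3 ≠ x1 := fun h => hx3 (by simp [h])
  have h32 : x3 ≠ x2 := fun h => hx3 (by simp [h])
  have hs21 : (x2.1 : S) ≠ (x1.1 : S) := by
    intro h; exact h21 (Subtype.ext (Subtype.ext h))
  have hs31 : (x3.1 : S) ≠ (x1.1 : S) := by
    intro h; exact h31 (Subtype.ext (Subtype.ext h))
  have hs32 : (x3.1 : S) ≠ (x2.1 : S) := by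
    intro h; exact h32 (Subtype.ext (Subtype.ext h))
  have r21 : (x2.1 : S) * (x1.1 : S) = 1 := (rel x1 x2).resolve_left hs21
  have r31 : (x3.1 : S) * (x1.1 : S) = 1 := (rel x1 x3).resolve_left hs31
  apply hs32
  calc (x3.1 : S) = (x3.1 : S) * ((x2.1 : S) * (x1.1 : S)) := by rw [r21, mul_one]
  _ = (x2.1 : S) * ((x3.1 : S) * (x1.1 : S)) := by ring
  _ = (x2.1 : S) := by rw [r31, mul_one]
end
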